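/- arXiv:2305.05130 — 10 statements merged into one kernel-verified Lean document; each statement's English description precedes it below -/
import Mathlib

section
/- Let {G_m(z)} be the sequence of polynomials generated by 1/(1+t+zt^2) = Σ_{m≥0} G_m(z) t^m, i.e. G_0 = 1, G_1 = −1, G_m = −G_{m−1} − z G_{m−2}. Then for every m ≥ 0, all zeros of G_m(z) lie in the real interval (1/4, ∞). -/
/-- If `G_0 = 1`, `G_1 = -1`, and `G_m = -G_{m-1} - X·G_{m-2}` (the polynomials
generated by `1/(1+t+zt²)`), then every zero of `G_m` is a real number in
`(1/4, ∞)`. -/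
theorem stmt_4 (G : ℕ → Polynomial ℂ)
    (h0 : G 0 = 1) (h1 : G 1 = -1)
    (hrec : ∀ m : ℕ, G (m + 2) = -G (m + 1) - Polynomial.X * G m) :
    ∀ m : ℕ, ∀ z : ℂ, (G m).eval z = 0 → ∃ x : ℝ, 1 / 4 < x ∧ z = (x : ℂ) := by
  intro m z hz
  obtain ⟨s, hs⟩ := IsAlgClosed.exists_pow_nat_eq (1 - 4*z) (n := 2) (by norm_num)
  by_cases hs0 : s = 0
  · -- then z = 1/4, and G m (1/4) = (-1)^m (m+1)/2^m ≠ 0, contradiction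
    exfalso
    have hz14 : z = 1/4 := by
      rw [hs0] at hs
      linear_combination (1/4 : ℂ) * hs
    have hform : ∀ n : ℕ, (G n).eval z = (-1)^n * (n+1) / 2^n ∧
        (G (n+1)).eval z = (-1)^(n+1) * ((n : ℂ)+2) / 2^(n+1) := by
      intro n
      induction n with
      | zero => norm_num [h0, h1]
      | succ k ih =>
        refine ⟨by push_cast; linear_combination ih.2, ?_⟩
        rw [hrec k]
        simp only [Polynomial.eval_sub, Polynomial.eval_neg, Polynomial.eval_mul,
          Polynomial.eval_X]
        rw [ih.1, ih.2, hz14]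
        push_cast
        field_simp
        ring
    have h := (hform m).1
    rw [hz] at h
    have hm1 : ((m : ℂ) + 1) ≠ 0 := Nat.cast_add_one_ne_zero m
    have h2 : ((-1 : ℂ))^m * ((m : ℂ)+1) / 2^m ≠ 0 := by
      apply div_ne_zero
      · exact mul_ne_zero (pow_ne_zero _ (by norm_num)) hm1
      · exact pow_ne_zero _ (by norm_num)
    exact h2 h.symm
  · obtain ⟨α, β, hsum, hdiff, hprod⟩ : ∃ α β : ℂ, α + β = -1 ∧ α - β = s ∧ α * β = z :=
      ⟨(-1+s)/2, (-1-s)/2, by ring, by ring, by linear_combination (-1/4 : ℂ) * hs⟩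
    have hα : α^2 = -α - z := by linear_combination α * hsum - hprod
    have hβ : β^2 = -β - z := by linear_combination β * hsum - hprod
    have key : ∀ n : ℕ, s * (G n).eval z = α^(n+1) - β^(n+1) ∧
        s * (G (n+1)).eval z = α^(n+2) - β^(n+2) := by
      intro n
      induction n with
      | zero =>
        constructor
        · rw [h0]; simp only [Polynomial.eval_one, pow_one]
          linear_combination -hdiff
        · rw [h1]; simp only [Polynomial.eval_neg, Polynomial.eval_one]
          linear_combination (-(α + β)) * hdiff - s * hsum
      | succ k ih =>
        refine ⟨ih.2, ?_⟩
        rw [hrec k]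
        simp only [Polynomial.eval_sub, Polynomial.eval_neg, Polynomial.eval_mul,
          Polynomial.eval_X]
        linear_combination (-1 : ℂ) * ih.2 - z * ih.1 - α^(k+1) * hα + β^(k+1) * hβ
    have hab : α^(m+1) = β^(m+1) := by
      have h := (key m).1
      rw [hz, mul_zero, eq_comm, sub_eq_zero] at h
      exact h
    have hβ0 : β ≠ 0 := by
      intro h
      rw [h, zero_pow (Nat.succ_ne_zero m)] at hab
      have hα0 : α = 0 := pow_eq_zero_iff (Nat.succ_ne_zero m) |>.mp hab
      rw [hα0, h] at hsum
      norm_num at hsum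
    obtain ⟨ω, hωβ⟩ : ∃ ω : ℂ, α = ω * β := ⟨α / β, by field_simp⟩
    have hω1 : ω^(m+1) = 1 := by
      have h : ω^(m+1) * β^(m+1) = 1 * β^(m+1) := by
        rw [← mul_pow, ← hωβ, hab, one_mul]
      exact mul_right_cancel₀ (pow_ne_zero _ hβ0) h
    have hω0 : ω ≠ 0 := by
      intro h
      rw [h, zero_pow (Nat.succ_ne_zero m)] at hω1
      exact zero_ne_one hω1
    have hωne1 : ω ≠ 1 := by
      intro h
      rw [h, one_mul] at hωβ
      rw [hωβ, sub_self] at hdiff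
      exact hs0 hdiff.symm
    have h1ω : (1 : ℂ) + ω ≠ 0 := by
      intro h
      have hω : ω = -1 := by linear_combination h
      rw [hω] at hωβ
      rw [hωβ] at hsum
      simp at hsum
    have hq : β * (1 + ω) = -1 := by linear_combination hsum - hωβ
    have hzω : z * (1 + ω)^2 = ω := by
      linear_combination (-(1+ω)^2) * hprod + β*(1+ω)^2 * hωβ + ω*(β*(1+ω)-1) * hq
    -- |ω| = 1, hence ω * conj ω = 1
    have habs : ‖ω‖ = 1 := by
      have h := congrArg norm hω1
      rw [norm_pow, norm_one] at h
      rcases (pow_eq_one_iff_of_ne_zero (Nat.succ_ne_zero m)).mp h with h' | h'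
      · exact h'
      · exfalso
        have := norm_nonneg ω
        rw [h'.1] at this
        linarith
    have hv : ω * (starRingEnd ℂ) ω = 1 := by
      rw [Complex.mul_conj, Complex.normSq_eq_norm_sq, habs]
      norm_num
    -- z is real: conj z = z
    have hcz : (starRingEnd ℂ) z * (1 + (starRingEnd ℂ) ω)^2 = (starRingEnd ℂ) ω := by
      have h := congrArg (starRingEnd ℂ) hzω
      simpa only [map_mul, map_pow, map_add, map_one] using h
    have hcz2 : (starRingEnd ℂ) z * (1 + ω)^2 = ω := by
      linear_combination ω^2 * hcz +
        (-(starRingEnd ℂ) z * (1 + 2*ω + ω * (starRingEnd ℂ) ω) + ω) * hv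
    have hzr : (starRingEnd ℂ) z = z :=
      mul_right_cancel₀ (pow_ne_zero 2 h1ω) (hcz2.trans hzω.symm)
    -- introduce w with w(1+ω) = 1-ω : purely imaginary and nonzero
    obtain ⟨w, hw⟩ : ∃ w : ℂ, w * (1 + ω) = 1 - ω :=
      ⟨(1 - ω) / (1 + ω), div_mul_cancel₀ _ h1ω⟩
    have hw0 : w ≠ 0 := by
      intro h
      rw [h, zero_mul, eq_comm, sub_eq_zero] at hw
      exact hωne1 hw.symm
    have hwconj : (starRingEnd ℂ) w = -w := by
      have hcw : (starRingEnd ℂ) w * (1 + (starRingEnd ℂ) ω) = 1 - (starRingEnd ℂ) ω := by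
        have h := congrArg (starRingEnd ℂ) hw
        simpa only [map_mul, map_add, map_sub, map_one] using h
      have h2 : (starRingEnd ℂ) w * (1 + ω) = (-w) * (1 + ω) := by
        linear_combination ω * hcw + hw - ((starRingEnd ℂ) w + 1) * hv
      exact mul_right_cancel₀ h1ω h2
    have hwre : w.re = 0 := by
      have h := congrArg Complex.re hwconj
      simp only [Complex.conj_re, Complex.neg_re] at h
      linarith
    have hwim : w.im ≠ 0 := by
      intro h
      exact hw0 (Complex.ext (by simp [hwre]) (by simp [h]))
    have h4 : 4 * z = 1 - w^2 := by
      have hmul : (4*z) * (1+ω)^2 = (1 - w^2) * (1+ω)^2 := by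
        linear_combination 4 * hzω + (w*(1+ω) + (1-ω)) * hw
      exact mul_right_cancel₀ (pow_ne_zero 2 h1ω) hmul
    have hwI : w = (w.im : ℂ) * Complex.I := by
      apply Complex.ext <;> simp [hwre]
    have hw2 : w^2 = -((w.im : ℂ))^2 := by
      conv_lhs => rw [hwI]
      rw [mul_pow, Complex.I_sq]; ring
    refine ⟨1/4 + w.im^2/4, ?_, ?_⟩
    · have h5 : 0 < w.im^2 := by positivity
      linarith
    · push_cast
      linear_combination (1/4 : ℂ) * h4 - (1/4 : ℂ) * hw2
end

section
/- For θ ∈ (π/2, π), set r(θ) = −2cos θ, t_1 = r e^{iθ}, t_2 = r e^{−iθ}, z(θ) = 1/(4cos²θ). Then t_1 and t_2 are distinct nonzero roots of 1 + t + z(θ) t², and for the polynomials G_m generated by 1/(1+t+zt²), G_m(z(θ)) = 4cos²θ · sin((m+1)θ) / (r^{m+2} sin θ). -/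
open Real Complex

/-- For `θ ∈ (π/2, π)`, with `r = -2cos θ`, `t₁ = r e^{iθ}`, `t₂ = r e^{-iθ}`,
`z = 1/(4cos²θ)`: `t₁, t₂` are distinct nonzero roots of `1 + t + z t²`, and
`G_m(z) = 4cos²θ · sin((m+1)θ) / (r^{m+2} sin θ)` for the polynomials `G_m`
generated by `1/(1+t+zt²)`. -/
theorem stmt_5 (G : ℕ → Polynomial ℂ)
    (h0 : G 0 = 1) (h1 : G 1 = -1)
    (hrec : ∀ m : ℕ, G (m + 2) = -G (m + 1) - Polynomial.X * G m)
    (θ : ℝ) (hθ : θ ∈ Set.Ioo (π / 2) π) :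
    let r : ℝ := -2 * Real.cos θ
    let t₁ : ℂ := (r : ℂ) * Complex.exp (θ * Complex.I)
    let t₂ : ℂ := (r : ℂ) * Complex.exp (-θ * Complex.I)
    let z : ℝ := 1 / (4 * Real.cos θ ^ 2)
    t₁ ≠ t₂ ∧ t₁ ≠ 0 ∧ t₂ ≠ 0 ∧
    1 + t₁ + (z : ℂ) * t₁ ^ 2 = 0 ∧ 1 + t₂ + (z : ℂ) * t₂ ^ 2 = 0 ∧
    ∀ m : ℕ, (G m).eval (z : ℂ) =
      ((4 * Real.cos θ ^ 2 * Real.sin ((m + 1) * θ) /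
        (r ^ (m + 2) * Real.sin θ) : ℝ) : ℂ) := by
  obtain ⟨hθ1, hθ2⟩ := hθ
  have hc : Real.cos θ < 0 := Real.cos_neg_of_pi_div_two_lt_of_lt hθ1 (by linarith [Real.pi_pos])
  have hs : Real.sin θ > 0 := Real.sin_pos_of_pos_of_lt_pi (by linarith [Real.pi_pos]) hθ2
  intro r t₁ t₂ z
  have hcne : Real.cos θ ≠ 0 := ne_of_lt hc
  have hsne : Real.sin θ ≠ 0 := ne_of_gt hs
  have hrne : r ≠ 0 := by simp only [r]; positivity
  have hrC : (r : ℂ) ≠ 0 := by exact_mod_cast hrne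
  have hzr2 : (z : ℂ) * (r : ℂ)^2 = 1 := by
    have : z * r^2 = 1 := by simp only [z, r]; field_simp; ring
    exact_mod_cast this
  have hcos : Complex.exp (θ * Complex.I) + Complex.exp (-(θ:ℂ) * Complex.I)
      = 2 * (Real.cos θ : ℂ) := by
    rw [Complex.exp_mul_I, Complex.exp_mul_I]
    simp [← Complex.ofReal_cos]
    ring
  have hrc : (r : ℂ) = -(Complex.exp (θ * Complex.I) + Complex.exp (-(θ:ℂ) * Complex.I)) := by
    rw [hcos]; simp only [r]; push_cast; ring
  have hee : Complex.exp (θ * Complex.I) * Complex.exp (-(θ:ℂ) * Complex.I) = 1 := by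
    rw [← Complex.exp_add]; simp
  have hsin : Complex.exp (θ * Complex.I) - Complex.exp (-(θ:ℂ) * Complex.I)
      = 2 * (Real.sin θ : ℂ) * Complex.I := by
    rw [Complex.exp_mul_I, Complex.exp_mul_I]
    simp [← Complex.ofReal_sin]
    ring
  refine ⟨?_, ?_, ?_, ?_, ?_, ?_⟩
  · intro h
    have heq := mul_left_cancel₀ hrC h
    rw [heq, sub_self] at hsin
    have h2 : (Real.sin θ : ℂ) = 0 := by
      have := hsin.symm
      simpa [Complex.I_ne_zero] using this
    exact hsne (by exact_mod_cast h2)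
  · exact mul_ne_zero hrC (Complex.exp_ne_zero _)
  · exact mul_ne_zero hrC (Complex.exp_ne_zero _)
  · show 1 + (r:ℂ) * Complex.exp (θ * Complex.I) + (z:ℂ) * ((r:ℂ) * Complex.exp (θ * Complex.I))^2 = 0
    linear_combination (Complex.exp (θ * Complex.I))^2 * hzr2 +
      Complex.exp (θ * Complex.I) * hrc - hee
  · show 1 + (r:ℂ) * Complex.exp (-(θ:ℂ) * Complex.I) + (z:ℂ) * ((r:ℂ) * Complex.exp (-(θ:ℂ) * Complex.I))^2 = 0
    linear_combination (Complex.exp (-(θ:ℂ) * Complex.I))^2 * hzr2 +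
      Complex.exp (-(θ:ℂ) * Complex.I) * hrc - hee
  · -- the recurrence formula
    have key : ∀ m : ℕ,
        4*Real.cos θ^2*Real.sin (((m:ℝ)+3)*θ)/(r^(m+4)*Real.sin θ)
        = -(4*Real.cos θ^2*Real.sin (((m:ℝ)+2)*θ)/(r^(m+3)*Real.sin θ))
          - z*(4*Real.cos θ^2*Real.sin (((m:ℝ)+1)*θ)/(r^(m+2)*Real.sin θ)) := by
      intro m
      rw [show ((m:ℝ)+3)*θ = ((m:ℝ)+2)*θ+θ by ring,
        show ((m:ℝ)+1)*θ = ((m:ℝ)+2)*θ-θ by ring, Real.sin_add, Real.sin_sub]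
      have hrp : ∀ k : ℕ, r ^ k ≠ 0 := fun k => pow_ne_zero k hrne
      simp only [z]; field_simp
      all_goals try (left; first | trivial | ring)
      all_goals
        rw [show m+4 = (m+2)+1+1 by ring, show m+3 = (m+2)+1 by ring, pow_succ, pow_succ]
        simp only [r]
        ring
    intro m
    induction m using Nat.twoStepInduction with
    | zero =>
      rw [h0]
      have : (4 * Real.cos θ ^ 2 * Real.sin (((0:ℕ) + 1) * θ) / (r ^ (0 + 2) * Real.sin θ) : ℝ) = 1 := by
        push_cast
        simp only [r]; field_simp
        all_goals try (left; first | trivial | ring)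
        all_goals ring
      rw [this]; simp
    | one =>
      rw [h1]
      have : (4 * Real.cos θ ^ 2 * Real.sin (((1:ℕ) + 1) * θ) / (r ^ (1 + 2) * Real.sin θ) : ℝ) = -1 := by
        push_cast
        rw [show ((1:ℝ)+1)*θ = 2*θ by ring, Real.sin_two_mul]
        field_simp [r]
        all_goals try (left; first | trivial | ring)
        all_goals ring
      rw [this]; simp
    | more m ih1 ih2 =>
      rw [hrec m]
      simp only [Polynomial.eval_sub, Polynomial.eval_neg, Polynomial.eval_mul, Polynomial.eval_X]
      rw [ih1, ih2]
      norm_cast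
      push_cast
      rw [show (m:ℝ)+1+1 = (m:ℝ)+2 by ring, show (m:ℝ)+2+1 = (m:ℝ)+3 by ring,
        show m+1+2 = m+3 by omega, show m+2+2 = m+4 by omega]
      exact (key m).symm
end

section
/- Let {J_m(z)} be defined by J_0 = 1, J_1 = −1, J_2 = 1, and J_m(z) = −J_{m−1}(z) − z J_{m−3}(z) for m ≥ 3. Then for each m ≥ 0, all zeros of J_m(z) lie in the real interval (−∞, −4/27). -/
open Real Polynomial

noncomputable def rr (θ : ℝ) : ℝ := -2 * Real.cos θ / (4 * Real.cos θ ^ 2 - 1)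
noncomputable def ss (θ : ℝ) : ℝ := 1 / (4 * Real.cos θ ^ 2 - 1)
noncomputable def zz (θ : ℝ) : ℝ := -4 * Real.cos θ ^ 2 / (4 * Real.cos θ ^ 2 - 1) ^ 3
noncomputable def GG (m : ℕ) (θ : ℝ) : ℝ :=
  rr θ ^ (m+2) * Real.sin ((m+1 : ℝ) * θ) - rr θ ^ (m+1) * ss θ * Real.sin ((m+2 : ℝ) * θ)
    + ss θ ^ (m+2) * Real.sin θ

lemma cos_gt {θ : ℝ} (h0 : 0 < θ) (h1 : θ < π/3) : 1/2 < Real.cos θ := by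
  have := Real.cos_lt_cos_of_nonneg_of_le_pi (le_of_lt h0)
    (by linarith [Real.pi_pos]) h1
  rwa [Real.cos_pi_div_three] at this

lemma cos_lt {θ : ℝ} (h0 : 0 < θ) (h1 : θ < π/3) : Real.cos θ < 1 := by
  have := Real.cos_lt_cos_of_nonneg_of_le_pi (le_refl 0)
    (by linarith [Real.pi_pos]) h0
  rwa [Real.cos_zero] at this

lemma D_pos {θ : ℝ} (h0 : 0 < θ) (h1 : θ < π/3) : 0 < 4 * Real.cos θ ^ 2 - 1 := by
  have h := cos_gt h0 h1; nlinarith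

lemma sin_pos' {θ : ℝ} (h0 : 0 < θ) (h1 : θ < π/3) : 0 < Real.sin θ :=
  Real.sin_pos_of_pos_of_lt_pi h0 (by nlinarith [Real.pi_pos])

lemma rr_neg {θ : ℝ} (h0 : 0 < θ) (h1 : θ < π/3) : rr θ < 0 := by
  have h := cos_gt h0 h1; have hD := D_pos h0 h1
  rw [rr]; apply div_neg_of_neg_of_pos (by linarith) hD

lemma ss_pos {θ : ℝ} (h0 : 0 < θ) (h1 : θ < π/3) : 0 < ss θ := by
  have hD := D_pos h0 h1; rw [ss]; positivity

lemma ss_lt {θ : ℝ} (h0 : 0 < θ) (h1 : θ < π/3) : ss θ < -rr θ := by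
  have h := cos_gt h0 h1; have hD := D_pos h0 h1
  rw [ss, rr]
  have e : -(-2 * Real.cos θ / (4 * Real.cos θ ^ 2 - 1)) = 2 * Real.cos θ / (4 * Real.cos θ ^ 2 - 1) := by ring
  rw [e, div_lt_div_iff₀ hD hD]
  nlinarith

lemma zz_lt {θ : ℝ} (h0 : 0 < θ) (h1 : θ < π/3) : zz θ < -4/27 := by
  have h := cos_gt h0 h1; have h2 := cos_lt h0 h1; have hD := D_pos h0 h1
  rw [zz, div_lt_iff₀ (by positivity)]
  have hC : Real.cos θ ^ 2 < 1 := by nlinarith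
  have hp : 0 < (1 - Real.cos θ ^ 2) * (8 * Real.cos θ ^ 2 + 1)^2 := by
    apply mul_pos (by linarith); positivity
  nlinarith [hp]

lemma zz_inj {θ₁ θ₂ : ℝ} (h₁ : 0 < θ₁) (h₁' : θ₁ < π/3) (h₂ : 0 < θ₂) (h₂' : θ₂ < π/3)
    (h : zz θ₁ = zz θ₂) : θ₁ = θ₂ := by
  have c1 := cos_gt h₁ h₁'; have c2 := cos_gt h₂ h₂'
  have d1 := D_pos h₁ h₁'; have d2 := D_pos h₂ h₂'
  have key : Real.cos θ₁ ^ 2 = Real.cos θ₂ ^ 2 := by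
    rw [zz, zz, div_eq_div_iff (by positivity) (by positivity)] at h
    have ha : (0:ℝ) < 4 * Real.cos θ₁ ^ 2 - 1 := d1
    have hb : (0:ℝ) < 4 * Real.cos θ₂ ^ 2 - 1 := d2
    have h2 : ((4 * Real.cos θ₂ ^ 2 - 1) - (4 * Real.cos θ₁ ^ 2 - 1)) *
        ((4 * Real.cos θ₁ ^ 2 - 1) * (4 * Real.cos θ₂ ^ 2 - 1) *
          ((4 * Real.cos θ₁ ^ 2 - 1) + (4 * Real.cos θ₂ ^ 2 - 1))
         + (4 * Real.cos θ₁ ^ 2 - 1)^2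
         + (4 * Real.cos θ₁ ^ 2 - 1) * (4 * Real.cos θ₂ ^ 2 - 1)
         + (4 * Real.cos θ₂ ^ 2 - 1)^2) = 0 := by linear_combination -h
    have hpos : 0 < (4 * Real.cos θ₁ ^ 2 - 1) * (4 * Real.cos θ₂ ^ 2 - 1) *
          ((4 * Real.cos θ₁ ^ 2 - 1) + (4 * Real.cos θ₂ ^ 2 - 1))
         + (4 * Real.cos θ₁ ^ 2 - 1)^2
         + (4 * Real.cos θ₁ ^ 2 - 1) * (4 * Real.cos θ₂ ^ 2 - 1)
         + (4 * Real.cos θ₂ ^ 2 - 1)^2 := by positivity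
    rcases mul_eq_zero.1 h2 with h' | h'
    · linarith
    · linarith
  have hcos : Real.cos θ₁ = Real.cos θ₂ := by nlinarith
  exact Real.injOn_cos ⟨le_of_lt h₁, by linarith [Real.pi_pos]⟩
    ⟨le_of_lt h₂, by linarith [Real.pi_pos]⟩ hcos
lemma bracket_sign (x s : ℝ) (hs : 0 < s) (hx : s < -x) (j k : ℕ) (hk : k ≠ 0) :
    0 < (-1:ℝ)^(j+k+1) * ((-1)^(j+1) * x^k + s^k) := by
  have h1 : ((-1:ℝ))^(j+k+1) * ((-1)^(j+1) * (-1)^k) = 1 := by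
    rw [← pow_add, ← pow_add]
    exact Even.neg_one_pow ⟨j+k+1, by omega⟩
  have h2 : x^k = (-1)^k * (-x)^k := by
    rw [← neg_pow, neg_neg]
  have h3 : -s^k ≤ (-1:ℝ)^(j+k+1) * s^k := by
    rcases Nat.even_or_odd (j+k+1) with h|h
    · rw [h.neg_one_pow]; nlinarith [pow_pos hs k]
    · rw [h.neg_one_pow]; linarith
  have h4 : s^k < (-x)^k := pow_lt_pow_left₀ hx (le_of_lt hs) hk
  have expand : (-1:ℝ)^(j+k+1) * ((-1)^(j+1) * x^k + s^k)
      = ((-1)^(j+k+1) * ((-1)^(j+1) * (-1)^k)) * (-x)^k + (-1)^(j+k+1) * s^k := by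
    rw [h2]; ring
  rw [expand, h1, one_mul]
  linarith
lemma GG_at_A (m j : ℕ) :
    GG m ((j:ℝ)*π/((m:ℝ)+2)) = Real.sin ((j:ℝ)*π/((m:ℝ)+2)) *
      ((-1)^(j+1) * rr ((j:ℝ)*π/((m:ℝ)+2)) ^ (m+2) + ss ((j:ℝ)*π/((m:ℝ)+2)) ^ (m+2)) := by
  set A := (j:ℝ)*π/((m:ℝ)+2) with hA
  have hm2 : ((m:ℝ)+2) ≠ 0 := by positivity
  have h2 : ((m:ℝ)+2) * A = (j:ℝ) * π := by rw [hA]; field_simp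
  have h1 : ((m:ℝ)+1) * A = (j:ℝ)*π - A := by rw [hA]; field_simp; ring
  rw [GG, h2, h1, Real.sin_nat_mul_pi, Real.sin_nat_mul_pi_sub]
  ring

lemma GG_at_B (m j : ℕ) :
    GG m ((j:ℝ)*π/((m:ℝ)+1)) = Real.sin ((j:ℝ)*π/((m:ℝ)+1)) * ss ((j:ℝ)*π/((m:ℝ)+1)) *
      ((-1)^(j+1) * rr ((j:ℝ)*π/((m:ℝ)+1)) ^ (m+1) + ss ((j:ℝ)*π/((m:ℝ)+1)) ^ (m+1)) := by
  set B := (j:ℝ)*π/((m:ℝ)+1) with hB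
  have hm1 : ((m:ℝ)+1) ≠ 0 := by positivity
  have h1 : ((m:ℝ)+1) * B = (j:ℝ) * π := by rw [hB]; field_simp
  have h2 : ((m:ℝ)+2) * B = B + (j:ℝ)*π := by rw [hB]; field_simp; ring
  rw [GG, h1, h2, Real.sin_nat_mul_pi, Real.sin_add_nat_mul_pi]
  ring

lemma GG_cont (m : ℕ) {s : Set ℝ} (hs : ∀ θ ∈ s, 4 * Real.cos θ ^ 2 - 1 ≠ 0) :
    ContinuousOn (GG m) s := by
  have hc : ContinuousOn (fun θ : ℝ => 4 * Real.cos θ ^ 2 - 1) s := by fun_prop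
  have hrr : ContinuousOn rr s := ContinuousOn.div (by fun_prop) hc hs
  have hss : ContinuousOn ss s := ContinuousOn.div (by fun_prop) hc hs
  unfold GG
  apply ContinuousOn.add
  apply ContinuousOn.sub
  · exact (hrr.pow _).mul (by fun_prop)
  · exact ((hrr.pow _).mul hss).mul (by fun_prop)
  · exact (hss.pow _).mul (by fun_prop)

lemma exists_zero (m j : ℕ) (hj1 : 1 ≤ j) (hj : 3*j ≤ m) :
    ∃ θ, θ ∈ Set.Icc ((j:ℝ)*π/((m:ℝ)+2)) ((j:ℝ)*π/((m:ℝ)+1)) ∧ GG m θ = 0 := by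
  set A := (j:ℝ)*π/((m:ℝ)+2) with hA
  set B := (j:ℝ)*π/((m:ℝ)+1) with hB
  have hjr : (1:ℝ) ≤ (j:ℝ) := by exact_mod_cast hj1
  have hjm : 3*(j:ℝ) ≤ (m:ℝ) := by exact_mod_cast hj
  have hpi := Real.pi_pos
  have hA0 : 0 < A := by rw [hA]; positivity
  have hAB : A < B := by
    rw [hA, hB]
    apply div_lt_div_of_pos_left (by positivity) (by positivity) (by linarith)
  have hB3 : B < π/3 := by
    rw [hB, div_lt_div_iff₀ (by positivity) (by norm_num)]
    nlinarith
  have hmem : ∀ θ ∈ Set.Icc A B, 0 < θ ∧ θ < π/3 := by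
    intro θ hθ
    exact ⟨lt_of_lt_of_le hA0 hθ.1, lt_of_le_of_lt hθ.2 hB3⟩
  have hcont : ContinuousOn (GG m) (Set.Icc A B) := by
    apply GG_cont
    intro θ hθ
    exact ne_of_gt (D_pos (hmem θ hθ).1 (hmem θ hθ).2)
  -- signs
  have hAmem : A ∈ Set.Icc A B := ⟨le_refl _, le_of_lt hAB⟩
  have hBmem : B ∈ Set.Icc A B := ⟨le_of_lt hAB, le_refl _⟩
  have hA3 : A < π/3 := lt_trans hAB hB3
  have hB0 : 0 < B := lt_trans hA0 hAB
  have hsA : 0 < Real.sin A := sin_pos' hA0 hA3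
  have hsB : 0 < Real.sin B := sin_pos' hB0 hB3
  have hbrA : 0 < (-1:ℝ)^(j+(m+2)+1) * ((-1)^(j+1) * rr A ^ (m+2) + ss A ^ (m+2)) :=
    bracket_sign (rr A) (ss A) (ss_pos hA0 hA3) (ss_lt hA0 hA3) j (m+2) (by omega)
  have hbrB : 0 < (-1:ℝ)^(j+(m+1)+1) * ((-1)^(j+1) * rr B ^ (m+1) + ss B ^ (m+1)) :=
    bracket_sign (rr B) (ss B) (ss_pos hB0 hB3) (ss_lt hB0 hB3) j (m+1) (by omega)
  have hvA := GG_at_A m j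
  have hvB := GG_at_B m j
  rw [← hA] at hvA
  rw [← hB] at hvB
  rcases Nat.even_or_odd (j+m) with hpar|hpar
  · -- j+m even: (-1)^(j+m+3) = -1 so bracket A < 0, GG A < 0; bracket B > 0, GG B > 0
    have e1 : ((-1:ℝ))^(j+(m+2)+1) = -1 := Odd.neg_one_pow (by rcases hpar with ⟨t, ht⟩; exact ⟨t+1, by omega⟩)
    have e2 : ((-1:ℝ))^(j+(m+1)+1) = 1 := Even.neg_one_pow (by rcases hpar with ⟨t, ht⟩; exact ⟨t+1, by omega⟩)
    rw [e1] at hbrA; rw [e2, one_mul] at hbrB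
    have hGA : GG m A < 0 := by
      rw [hvA]; exact mul_neg_of_pos_of_neg hsA (by linarith)
    have hGB : 0 < GG m B := by
      rw [hvB]; exact mul_pos (mul_pos hsB (ss_pos hB0 hB3)) hbrB
    have h0 : (0:ℝ) ∈ Set.Icc (GG m A) (GG m B) := ⟨le_of_lt hGA, le_of_lt hGB⟩
    obtain ⟨θ, hθ, hθ0⟩ := intermediate_value_Icc (le_of_lt hAB) hcont h0
    exact ⟨θ, hθ, hθ0⟩
  · have e1 : ((-1:ℝ))^(j+(m+2)+1) = 1 := Even.neg_one_pow (by rcases hpar with ⟨t, ht⟩; exact ⟨t+2, by omega⟩)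
    have e2 : ((-1:ℝ))^(j+(m+1)+1) = -1 := Odd.neg_one_pow (by rcases hpar with ⟨t, ht⟩; exact ⟨t+1, by omega⟩)
    rw [e1, one_mul] at hbrA; rw [e2] at hbrB
    have hGA : 0 < GG m A := by rw [hvA]; exact mul_pos hsA hbrA
    have hGB : GG m B < 0 := by
      rw [hvB]; exact mul_neg_of_pos_of_neg (mul_pos hsB (ss_pos hB0 hB3)) (by linarith)
    have h0 : (0:ℝ) ∈ Set.Icc (GG m B) (GG m A) := ⟨le_of_lt hGB, le_of_lt hGA⟩
    obtain ⟨θ, hθ, hθ0⟩ := intermediate_value_Icc' (le_of_lt hAB) hcont h0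
    exact ⟨θ, hθ, hθ0⟩
noncomputable def Wfun (x₁ x₂ x₃ : ℂ) (k : ℕ) : ℂ :=
  x₁^(k+2)*(x₂-x₃) - x₂^(k+2)*(x₁-x₃) + x₃^(k+2)*(x₁-x₂)

lemma Wfun_rec (x₁ x₂ x₃ z : ℂ) (hx1 : x₁^3+x₁^2+z = 0) (hx2 : x₂^3+x₂^2+z = 0)
    (hx3 : x₃^3+x₃^2+z = 0) (k : ℕ) :
    Wfun x₁ x₂ x₃ (k+3) = -Wfun x₁ x₂ x₃ (k+2) - z * Wfun x₁ x₂ x₃ k := by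
  simp only [Wfun]
  linear_combination (x₂-x₃)*x₁^(k+2) * hx1 - (x₁-x₃)*x₂^(k+2) * hx2 + (x₁-x₂)*x₃^(k+2) * hx3

lemma Wfun_one (x₁ x₂ x₃ z : ℂ) (hx1 : x₁^3+x₁^2+z = 0) (hx2 : x₂^3+x₂^2+z = 0)
    (hx3 : x₃^3+x₃^2+z = 0) :
    Wfun x₁ x₂ x₃ 1 = -Wfun x₁ x₂ x₃ 0 := by
  simp only [Wfun]
  linear_combination (x₂-x₃) * hx1 - (x₁-x₃) * hx2 + (x₁-x₂) * hx3

lemma Wfun_two (x₁ x₂ x₃ z : ℂ) (hx1 : x₁^3+x₁^2+z = 0) (hx2 : x₂^3+x₂^2+z = 0)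
    (hx3 : x₃^3+x₃^2+z = 0) :
    Wfun x₁ x₂ x₃ 2 = Wfun x₁ x₂ x₃ 0 := by
  have h1 := Wfun_one x₁ x₂ x₃ z hx1 hx2 hx3
  simp only [Wfun] at h1 ⊢
  linear_combination x₁*(x₂-x₃) * hx1 - x₂*(x₁-x₃) * hx2 + x₃*(x₁-x₂) * hx3 - h1

lemma Wfun_factor (x₁ x₂ x₃ : ℂ) :
    Wfun x₁ x₂ x₃ 0 = (x₁-x₂)*(x₁-x₃)*(x₂-x₃) := by
  simp only [Wfun]; ring

lemma J_eval_eq_W (J : ℕ → Polynomial ℂ) (h0 : J 0 = 1) (h1 : J 1 = -1) (h2 : J 2 = 1)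
    (hrec : ∀ m : ℕ, J (m + 3) = -J (m + 2) - Polynomial.X * J m)
    (x₁ x₂ x₃ z : ℂ) (hx1 : x₁^3+x₁^2+z = 0) (hx2 : x₂^3+x₂^2+z = 0)
    (hx3 : x₃^3+x₃^2+z = 0) :
    ∀ k, (J k).eval z * Wfun x₁ x₂ x₃ 0 = Wfun x₁ x₂ x₃ k := by
  have key : ∀ k, ((J k).eval z * Wfun x₁ x₂ x₃ 0 = Wfun x₁ x₂ x₃ k)
      ∧ ((J (k+1)).eval z * Wfun x₁ x₂ x₃ 0 = Wfun x₁ x₂ x₃ (k+1))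
      ∧ ((J (k+2)).eval z * Wfun x₁ x₂ x₃ 0 = Wfun x₁ x₂ x₃ (k+2)) := by
    intro k
    induction k with
    | zero =>
      refine ⟨?_, ?_, ?_⟩
      · rw [h0]; simp
      · rw [h1]; simp [Wfun_one x₁ x₂ x₃ z hx1 hx2 hx3]
      · rw [h2]; simp [Wfun_two x₁ x₂ x₃ z hx1 hx2 hx3]
    | succ n ih =>
      refine ⟨ih.2.1, ih.2.2, ?_⟩
      rw [hrec n]
      simp only [Polynomial.eval_sub, Polynomial.eval_neg, Polynomial.eval_mul,
        Polynomial.eval_X]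
      rw [Wfun_rec x₁ x₂ x₃ z hx1 hx2 hx3 n]
      have e1 := ih.1
      have e2 := ih.2.2
      ring_nf
      ring_nf at e1 e2
      linear_combination -e2 - z * e1
  exact fun k => (key k).1
lemma sin_exp (w : ℂ) : Complex.sin w
    = (Complex.exp (w*Complex.I) - (Complex.exp (w*Complex.I))⁻¹)/(2*Complex.I) := by
  rw [Complex.sin, ← Complex.exp_neg]
  have h : -w * Complex.I = -(w * Complex.I) := by ring
  rw [h]
  field_simp
  linear_combination ((Complex.exp (-(w*Complex.I)) - Complex.exp (w*Complex.I))) * Complex.I_sq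

lemma bridge (J : ℕ → Polynomial ℂ) (h0 : J 0 = 1) (h1 : J 1 = -1) (h2 : J 2 = 1)
    (hrec : ∀ m : ℕ, J (m + 3) = -J (m + 2) - Polynomial.X * J m)
    (m : ℕ) (θ : ℝ) (hθ0 : 0 < θ) (hθ3 : θ < π/3) (hG : GG m θ = 0) :
    (J m).eval ((zz θ : ℝ) : ℂ) = 0 := by
  have hD : 0 < 4 * Real.cos θ ^ 2 - 1 := D_pos hθ0 hθ3
  have hDne : (4 * Real.cos θ ^ 2 - 1) ≠ 0 := ne_of_gt hD
  have hsp : 0 < Real.sin θ := sin_pos' hθ0 hθ3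
  have hrn : rr θ < 0 := rr_neg hθ0 hθ3
  set c := Real.cos θ with hc
  set s := Real.sin θ with hs
  set r := rr θ with hr
  set sv := ss θ with hsv
  set zv := zz θ with hzv
  -- real identities
  have hs2 : s^2 = 1 - c^2 := by
    have := Real.sin_sq_add_cos_sq θ; rw [← hc, ← hs] at this; linarith
  have hrD : r * (4*c^2 - 1) = -2*c := by
    rw [hr, rr, ← hc]; field_simp
    rw [mul_div_assoc, div_self (by contrapose! hDne; linarith), mul_one]
  have hsvD : sv * (4*c^2 - 1) = 1 := by
    rw [hsv, ss, ← hc]; field_simp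
  have hzr : zv = r^2 + 2*r^3*c := by
    rw [hzv, zz, hr, rr, ← hc]; field_simp; ring
  have hx3r : sv^3 + sv^2 + zv = 0 := by
    rw [hsv, ss, hzv, zz, ← hc]; field_simp; ring
  -- complex setup
  set E := Complex.exp (θ * Complex.I) with hEdef
  have hE0 : E ≠ 0 := Complex.exp_ne_zero _
  have hE : E = (c:ℂ) + (s:ℂ) * Complex.I := by
    rw [hEdef, Complex.exp_mul_I, ← Complex.ofReal_cos, ← Complex.ofReal_sin]
  have hs2C : (s:ℂ)^2 = 1 - (c:ℂ)^2 := by exact_mod_cast congrArg (fun x:ℝ => (x:ℂ)) hs2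
  have hEinv : E⁻¹ = (c:ℂ) - (s:ℂ) * Complex.I := by
    apply inv_eq_of_mul_eq_one_right
    rw [hE]
    linear_combination (-(s:ℂ)^2) * Complex.I_sq + hs2C
  set x₁ := (r:ℂ) * E with hx1def
  set x₂ := (r:ℂ) * E⁻¹ with hx2def
  set x₃ := ((sv:ℝ):ℂ) with hx3def
  set zc := ((zv:ℝ):ℂ) with hzcdef
  have hrDC : (r:ℂ) * (4*(c:ℂ)^2 - 1) = -2*(c:ℂ) := by exact_mod_cast congrArg (fun x:ℝ => (x:ℂ)) hrD
  have hzrC : zc = (r:ℂ)^2 + 2*(r:ℂ)^3*(c:ℂ) := by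
    rw [hzcdef]; exact_mod_cast congrArg (fun x:ℝ => (x:ℂ)) hzr
  have hq1 : x₁^2 = 2*(r:ℂ)*(c:ℂ)*x₁ - (r:ℂ)^2 := by
    rw [hx1def, hE]
    linear_combination ((r:ℂ)^2*(s:ℂ)^2) * Complex.I_sq + (-(r:ℂ)^2) * hs2C
  have hq2 : x₂^2 = 2*(r:ℂ)*(c:ℂ)*x₂ - (r:ℂ)^2 := by
    rw [hx2def, hEinv]
    linear_combination ((r:ℂ)^2*(s:ℂ)^2) * Complex.I_sq + (-(r:ℂ)^2) * hs2C
  have hcubic : ∀ x : ℂ, x^2 = 2*(r:ℂ)*(c:ℂ)*x - (r:ℂ)^2 → x^3 + x^2 + zc = 0 := by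
    intro x hq
    linear_combination (x + 2*(r:ℂ)*(c:ℂ) + 1) * hq + (x*(r:ℂ)) * hrDC + hzrC
  have hx1c : x₁^3 + x₁^2 + zc = 0 := hcubic x₁ hq1
  have hx2c : x₂^3 + x₂^2 + zc = 0 := hcubic x₂ hq2
  have hx3c : x₃^3 + x₃^2 + zc = 0 := by
    rw [hx3def, hzcdef]; exact_mod_cast congrArg (fun x:ℝ => (x:ℂ)) hx3r
  -- sin expansion
  have hsin : ∀ k : ℕ, ((Real.sin ((k:ℝ)*θ) : ℝ):ℂ) = (E^k - (E^k)⁻¹) / (2*Complex.I) := by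
    intro k
    have h1 : E^k = Complex.exp ((((k:ℝ)*θ : ℝ):ℂ) * Complex.I) := by
      rw [hEdef, ← Complex.exp_nat_mul]
      congr 1; push_cast; ring
    rw [Complex.ofReal_sin, sin_exp, ← h1]
  have hsin1 : ((s:ℝ):ℂ) = (E - E⁻¹)/(2*Complex.I) := by
    have h := hsin 1
    norm_num at h
    rw [hs, Complex.ofReal_sin]; exact h
  have hsinm1 : ((Real.sin (((m:ℝ)+1)*θ) : ℝ):ℂ) = (E^(m+1) - (E^(m+1))⁻¹)/(2*Complex.I) := by
    have h := hsin (m+1)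
    have e : ((m+1 : ℕ):ℝ) = (m:ℝ)+1 := by push_cast; ring
    rw [e] at h; exact h
  have hsinm2 : ((Real.sin (((m:ℝ)+2)*θ) : ℝ):ℂ) = (E^(m+2) - (E^(m+2))⁻¹)/(2*Complex.I) := by
    have h := hsin (m+2)
    have e : ((m+2 : ℕ):ℝ) = (m:ℝ)+2 := by push_cast; ring
    rw [e] at h; exact h
  have hWG : Wfun x₁ x₂ x₃ m = 2*Complex.I*(r:ℂ)*((GG m θ : ℝ):ℂ) := by
    have hGGc : ((GG m θ : ℝ):ℂ) = (r:ℂ)^(m+2) * ((Real.sin (((m:ℝ)+1)*θ):ℝ):ℂ)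
        - (r:ℂ)^(m+1) * ((sv:ℝ):ℂ) * ((Real.sin (((m:ℝ)+2)*θ):ℝ):ℂ)
        + ((sv:ℝ):ℂ)^(m+2) * ((s:ℝ):ℂ) := by
      rw [GG, ← hr, ← hsv, ← hs]; push_cast; ring
    have hI : (2*Complex.I) ≠ 0 := by simp [Complex.I_ne_zero]
    have hFG : E * E⁻¹ = 1 := mul_inv_cancel₀ hE0
    have hm1 : ((Real.sin (((m:ℝ)+1)*θ) : ℝ):ℂ) * (2*Complex.I) = E^(m+1) - (E⁻¹)^(m+1) := by
      rw [hsinm1, ← inv_pow]; field_simp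
    have hm2 : ((Real.sin (((m:ℝ)+2)*θ) : ℝ):ℂ) * (2*Complex.I) = E^(m+2) - (E⁻¹)^(m+2) := by
      rw [hsinm2, ← inv_pow]; field_simp
    have hm0 : ((s:ℝ):ℂ) * (2*Complex.I) = E - E⁻¹ := by
      rw [hsin1]; field_simp
    rw [Wfun, hGGc, hx1def, hx2def, hx3def]
    linear_combination (-(r:ℂ)^(m+3)) * hm1 + ((r:ℂ)^(m+2)*((sv:ℝ):ℂ)) * hm2
      + (-(r:ℂ)*((sv:ℝ):ℂ)^(m+2)) * hm0
      + ((r:ℂ)^(m+3)*(E^(m+1) - (E⁻¹)^(m+1))) * hFG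
  have hV : Wfun x₁ x₂ x₃ 0 ≠ 0 := by
    rw [Wfun_factor]
    have hr0 : (r:ℂ) ≠ 0 := by exact_mod_cast ne_of_lt hrn
    have hs0 : (s:ℂ) ≠ 0 := by exact_mod_cast ne_of_gt hsp
    have hrs : r * s ≠ 0 := mul_ne_zero (ne_of_lt hrn) (ne_of_gt hsp)
    apply mul_ne_zero (mul_ne_zero ?_ ?_) ?_
    · have e : x₁ - x₂ = (r:ℂ)*(s:ℂ)*(2*Complex.I) := by
        rw [hx1def, hx2def, hEinv, hE]; ring
      rw [e]
      exact mul_ne_zero (mul_ne_zero hr0 hs0) (by simp [Complex.I_ne_zero])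
    · intro h
      have him : (x₁ - x₃).im = r*s := by
        rw [hx1def, hx3def, hE]; simp
      rw [h] at him; simp at him
      rcases him with h'|h' <;> linarith
    · intro h
      have him : (x₂ - x₃).im = -(r*s) := by
        rw [hx2def, hx3def, hEinv]; simp
      rw [h] at him; simp at him
      rcases him with h'|h' <;> linarith
  have hL := J_eval_eq_W J h0 h1 h2 hrec x₁ x₂ x₃ zc hx1c hx2c hx3c m
  have hzero : (J m).eval zc * Wfun x₁ x₂ x₃ 0 = 0 := by
    rw [hL, hWG, hG]; simp
  exact (mul_eq_zero.mp hzero).resolve_right hV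
def bb : ℕ → ℕ
  | 0 => 1
  | 1 => 1
  | 2 => 1
  | (m+3) => (if m % 3 = 0 then 0 else bb (m+2)) + bb m

lemma bb_pos : ∀ m, 0 < bb m := by
  intro m
  induction m using Nat.strong_induction_on with
  | _ m ih =>
    match m with
    | 0 => simp [bb]
    | 1 => simp [bb]
    | 2 => simp [bb]
    | (k+3) =>
      have := ih k (by omega)
      simp only [bb]; omega

lemma J_coeff (J : ℕ → Polynomial ℂ) (h0 : J 0 = 1) (h1 : J 1 = -1) (h2 : J 2 = 1)
    (hrec : ∀ m : ℕ, J (m + 3) = -J (m + 2) - Polynomial.X * J m) :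
    ∀ m, (J m).natDegree ≤ m/3 ∧ (J m).coeff (m/3) = (-1)^m * (bb m : ℂ) := by
  have key : ∀ m, ((J m).natDegree ≤ m/3 ∧ (J m).coeff (m/3) = (-1)^m * (bb m : ℂ))
      ∧ ((J (m+1)).natDegree ≤ (m+1)/3 ∧ (J (m+1)).coeff ((m+1)/3) = (-1)^(m+1) * (bb (m+1) : ℂ))
      ∧ ((J (m+2)).natDegree ≤ (m+2)/3 ∧ (J (m+2)).coeff ((m+2)/3) = (-1)^(m+2) * (bb (m+2) : ℂ)) := by
    intro m
    induction m with
    | zero =>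
      refine ⟨⟨?_, ?_⟩, ⟨?_, ?_⟩, ⟨?_, ?_⟩⟩ <;> simp [h0, h1, h2, bb]
    | succ n ih =>
      refine ⟨ih.2.1, ih.2.2, ?_, ?_⟩
      · -- degree bound for J (n+3)
        have e3 : (n+3)/3 = n/3 + 1 := by omega
        rw [hrec n, e3]
        apply le_trans (Polynomial.natDegree_sub_le _ _)
        apply max_le
        · rw [Polynomial.natDegree_neg]
          exact le_trans ih.2.2.1 (by omega)
        · apply le_trans (Polynomial.natDegree_mul_le)
          have := ih.1.1
          simp [Polynomial.natDegree_X]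
          omega
      · -- coefficient of J (n+3)
        have e3 : (n+3)/3 = n/3 + 1 := by omega
        rw [hrec n, e3]
        rw [Polynomial.coeff_sub, Polynomial.coeff_neg, Polynomial.coeff_X_mul]
        rw [ih.1.2]
        by_cases h : n % 3 = 0
        · have e2 : (n+2)/3 = n/3 := by omega
          have hz : (J (n+2)).coeff (n/3 + 1) = 0 := by
            apply Polynomial.coeff_eq_zero_of_natDegree_lt
            apply lt_of_le_of_lt ih.2.2.1
            omega
          rw [hz]
          have hb : bb (n+3) = bb n := by simp [bb, h]
          rw [hb, pow_add]
          ring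
        · have e2 : (n+2)/3 = n/3 + 1 := by omega
          have hc2 := ih.2.2.2
          rw [e2] at hc2
          rw [hc2]
          have hb : bb (n+3) = bb (n+2) + bb n := by simp [bb, h]
          rw [hb, pow_add, pow_add]
          push_cast
          ring
  exact fun m => (key m).1

lemma J_natDegree (J : ℕ → Polynomial ℂ) (h0 : J 0 = 1) (h1 : J 1 = -1) (h2 : J 2 = 1)
    (hrec : ∀ m : ℕ, J (m + 3) = -J (m + 2) - Polynomial.X * J m) (m : ℕ) :
    (J m).natDegree = m/3 ∧ J m ≠ 0 := by
  obtain ⟨hle, hco⟩ := J_coeff J h0 h1 h2 hrec m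
  have hne : (J m).coeff (m/3) ≠ 0 := by
    rw [hco]
    apply mul_ne_zero
    · exact pow_ne_zero _ (by norm_num)
    · exact_mod_cast Nat.pos_iff_ne_zero.mp (bb_pos m)
  refine ⟨le_antisymm hle (Polynomial.le_natDegree_of_ne_zero hne), ?_⟩
  intro h
  rw [h] at hne
  simp at hne

/-- If `J_0 = 1`, `J_1 = -1`, `J_2 = 1`, and `J_m = -J_{m-1} - X·J_{m-3}` (the
polynomials generated by `1/(1+t+zt³)`), then every zero of `J_m` is a real
number in `(-∞, -4/27)`. -/
theorem stmt_7 (J : ℕ → Polynomial ℂ)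
    (h0 : J 0 = 1) (h1 : J 1 = -1) (h2 : J 2 = 1)
    (hrec : ∀ m : ℕ, J (m + 3) = -J (m + 2) - Polynomial.X * J m) :
    ∀ m : ℕ, ∀ z : ℂ, (J m).eval z = 0 → ∃ x : ℝ, x < -4 / 27 ∧ z = (x : ℂ) := by
  intro m z hz
  obtain ⟨hdeg, hne⟩ := J_natDegree J h0 h1 h2 hrec m
  set K := m/3 with hK
  have h3K : 3*K ≤ m := by omega
  have hpi := Real.pi_pos
  -- choose a zero of GG m in each window
  have hex : ∀ i : Fin K, ∃ θ : ℝ,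
      θ ∈ Set.Icc ((((i:ℕ)+1 : ℕ):ℝ)*π/((m:ℝ)+2)) ((((i:ℕ)+1 : ℕ):ℝ)*π/((m:ℝ)+1))
        ∧ GG m θ = 0 := by
    intro i
    exact exists_zero m ((i:ℕ)+1) (by omega) (by have := i.2; omega)
  choose t ht using hex
  have hbound : ∀ i : Fin K, 0 < t i ∧ t i < π/3 := by
    intro i
    have h1i := (ht i).1.1
    have h2i := (ht i).1.2
    have hipos : (0:ℝ) < (((i:ℕ)+1 : ℕ):ℝ) := by positivity
    constructor
    · apply lt_of_lt_of_le _ h1i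
      positivity
    · apply lt_of_le_of_lt h2i
      rw [div_lt_div_iff₀ (by positivity) (by norm_num)]
      have him : 3*((i:ℕ)+1) ≤ m := by have := i.2; omega
      have himr : 3*((((i:ℕ)+1 : ℕ)):ℝ) ≤ (m:ℝ) := by exact_mod_cast him
      nlinarith
  have hroot : ∀ i : Fin K, (J m).eval ((zz (t i) : ℝ):ℂ) = 0 := fun i =>
    bridge J h0 h1 h2 hrec m (t i) (hbound i).1 (hbound i).2 (ht i).2
  -- the chosen parameters are strictly ordered, hence distinct
  have horder : ∀ i i' : Fin K, (i:ℕ) < (i':ℕ) → t i < t i' := by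
    intro i i' hii
    have h2i := (ht i).1.2
    have h1i' := (ht i').1.1
    have hnat : ((i:ℕ)+1)*(m+2) < ((i':ℕ)+1)*(m+1) := by
      have him : (i:ℕ) < m := by have := i'.2; omega
      calc ((i:ℕ)+1)*(m+2) = ((i:ℕ)+1)*(m+1) + ((i:ℕ)+1) := by ring
        _ ≤ (i':ℕ)*(m+1) + ((i:ℕ)+1) := by
            have : (i:ℕ)+1 ≤ (i':ℕ) := hii
            exact Nat.add_le_add_right (Nat.mul_le_mul_right _ this) _
        _ < (i':ℕ)*(m+1) + (m+1) := by omega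
        _ = ((i':ℕ)+1)*(m+1) := by ring
    have hcast : (((i:ℕ)+1 : ℕ):ℝ)*((m:ℝ)+2) < (((i':ℕ)+1 : ℕ):ℝ)*((m:ℝ)+1) := by
      have := hnat
      push_cast
      exact_mod_cast (by exact_mod_cast this : ((((i:ℕ)+1)*(m+2) : ℕ):ℝ) < ((((i':ℕ)+1)*(m+1) : ℕ):ℝ))
    have hBA : (((i:ℕ)+1 : ℕ):ℝ)*π/((m:ℝ)+1) < (((i':ℕ)+1 : ℕ):ℝ)*π/((m:ℝ)+2) := by
      rw [div_lt_div_iff₀ (by positivity) (by positivity)]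
      nlinarith
    calc t i ≤ _ := h2i
      _ < _ := hBA
      _ ≤ t i' := h1i'
  have htne : ∀ i i' : Fin K, i ≠ i' → t i ≠ t i' := by
    intro i i' hne'
    rcases lt_trichotomy (i:ℕ) (i':ℕ) with h|h|h
    · exact ne_of_lt (horder i i' h)
    · exact absurd (Fin.ext h) hne'
    · exact (ne_of_lt (horder i' i h)).symm
  -- the finite set of found roots
  set S : Finset ℂ := Finset.image (fun i : Fin K => ((zz (t i) : ℝ):ℂ)) Finset.univ with hS
  have hcard : S.card = K := by
    rw [hS, Finset.card_image_of_injOn, Finset.card_univ, Fintype.card_fin]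
    intro i _ i' _ hEq
    by_contra hne'
    apply htne i i' hne'
    have : zz (t i) = zz (t i') := by simp only [] at hEq; exact_mod_cast hEq
    exact zz_inj (hbound i).1 (hbound i).2 (hbound i').1 (hbound i').2 this
  have hsub : S.val ≤ (J m).roots := by
    rw [Multiset.le_iff_subset S.nodup]
    intro x hx
    obtain ⟨i, _, hi⟩ := Finset.mem_image.mp (Finset.mem_val.mp hx)
    rw [Polynomial.mem_roots hne]
    rw [← hi]
    exact hroot i
  have hcard2 : Multiset.card (J m).roots ≤ K := by
    rw [← hdeg]; exact Polynomial.card_roots' _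
  have heq : S.val = (J m).roots := by
    apply Multiset.eq_of_le_of_card_le hsub
    rw [show Multiset.card S.val = S.card from rfl, hcard]
    exact hcard2
  have hzmem : z ∈ (J m).roots := by rw [Polynomial.mem_roots hne]; exact hz
  rw [← heq] at hzmem
  obtain ⟨i, _, hi⟩ := Finset.mem_image.mp (Finset.mem_val.mp hzmem)
  exact ⟨zz (t i), zz_lt (hbound i).1 (hbound i).2, hi.symm⟩
end

section
/- For θ ∈ (2π/3, π), define r = (1−4cos²θ)/(2cos θ), q = −2cos θ, z = −1/(r³q), t_1 = re^{iθ}, t_2 = re^{−iθ}, t_3 = rq. Then t_1, t_2, t_3 are distinct, nonzero, and 1 + t + z t³ = z(t−t_1)(t−t_2)(t−t_3) for all complex t. -/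
open Real

/-- For `θ ∈ (2π/3, π)`, with `r = (1-4cos²θ)/(2cos θ)`, `q = -2cos θ`,
`z = -1/(r³q)`, `t₁ = re^{iθ}`, `t₂ = re^{-iθ}`, `t₃ = rq`: the numbers
`t₁, t₂, t₃` are distinct and nonzero, and `1 + t + z t³ = z(t-t₁)(t-t₂)(t-t₃)`
for all complex `t`. -/
theorem stmt_8 (θ : ℝ) (hθ : θ ∈ Set.Ioo (2 * π / 3) π) :
    let r : ℝ := (1 - 4 * Real.cos θ ^ 2) / (2 * Real.cos θ)
    let q : ℝ := -2 * Real.cos θ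
    let z : ℝ := -1 / (r ^ 3 * q)
    let t₁ : ℂ := (r : ℂ) * Complex.exp (θ * Complex.I)
    let t₂ : ℂ := (r : ℂ) * Complex.exp (-θ * Complex.I)
    let t₃ : ℂ := (r : ℂ) * (q : ℂ)
    t₁ ≠ t₂ ∧ t₁ ≠ t₃ ∧ t₂ ≠ t₃ ∧ t₁ ≠ 0 ∧ t₂ ≠ 0 ∧ t₃ ≠ 0 ∧
    ∀ t : ℂ, 1 + t + (z : ℂ) * t ^ 3 = (z : ℂ) * (t - t₁) * (t - t₂) * (t - t₃) := by
  obtain ⟨hθ1, hθ2⟩ := hθ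
  have hπ : 0 < π := Real.pi_pos
  have hθ0 : 0 < θ := by linarith
  have hs : 0 < Real.sin θ := Real.sin_pos_of_pos_of_lt_pi hθ0 hθ2
  have hcval : Real.cos (2 * π / 3) = -(1/2) := by
    have : (2 : ℝ) * π / 3 = π - π / 3 := by ring
    rw [this, Real.cos_pi_sub, Real.cos_pi_div_three]
  have hc : Real.cos θ < -(1/2) := by
    have := Real.strictAntiOn_cos (a := 2 * π / 3) (b := θ)
      ⟨by positivity, by linarith⟩ ⟨by linarith, le_of_lt hθ2⟩ hθ1
    linarith [hcval ▸ this]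
  have hc0 : Real.cos θ < 0 := by linarith
  have h4c : 1 - 4 * Real.cos θ ^ 2 < 0 := by nlinarith
  intro r q z t₁ t₂ t₃
  have hrpos : 0 < r := div_pos_iff.mpr (Or.inr ⟨h4c, by linarith⟩)
  have hqpos : 0 < q := by simp only [q]; linarith
  have hrne : r ≠ 0 := ne_of_gt hrpos
  have hqne : q ≠ 0 := ne_of_gt hqpos
  have h2c : (2 : ℝ) * Real.cos θ ≠ 0 := by linarith
  have hr2 : r * (2 * Real.cos θ) = 1 - 4 * Real.cos θ ^ 2 := by
    simp only [r]; exact div_mul_cancel₀ _ h2c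
  have hz3 : z * (r ^ 3 * q) = -1 := by
    simp only [z]; field_simp
  -- complex versions
  have h1 : (Real.sin θ : ℂ) ^ 2 = 1 - (Real.cos θ : ℂ) ^ 2 := by
    norm_cast
    linarith [Real.sin_sq_add_cos_sq θ]
  have h2 : (r : ℂ) * (2 * (Real.cos θ : ℂ)) = 1 - 4 * (Real.cos θ : ℂ) ^ 2 := by
    exact_mod_cast congrArg (Complex.ofReal) hr2
  have h3 : (z : ℂ) * ((r : ℂ) ^ 3 * (q : ℂ)) = -1 := by
    exact_mod_cast congrArg (Complex.ofReal) hz3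
  have hqc : (q : ℂ) = -2 * (Real.cos θ : ℂ) := by
    simp only [q]; push_cast; ring
  have hexp1 : Complex.exp ((θ : ℂ) * Complex.I)
      = (Real.cos θ : ℂ) + (Real.sin θ : ℂ) * Complex.I := by
    rw [Complex.exp_mul_I, Complex.ofReal_cos, Complex.ofReal_sin]
  have hexp2 : Complex.exp (-(θ : ℂ) * Complex.I)
      = (Real.cos θ : ℂ) - (Real.sin θ : ℂ) * Complex.I := by
    rw [Complex.exp_mul_I, Complex.cos_neg, Complex.sin_neg, Complex.ofReal_cos,
      Complex.ofReal_sin]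
    ring
  have ht₁ : t₁ = (r : ℂ) * ((Real.cos θ : ℂ) + (Real.sin θ : ℂ) * Complex.I) := by
    simp only [t₁, hexp1]
  have ht₂ : t₂ = (r : ℂ) * ((Real.cos θ : ℂ) - (Real.sin θ : ℂ) * Complex.I) := by
    simp only [t₂, hexp2]
  have him1 : t₁.im = r * Real.sin θ := by
    rw [ht₁]
    simp only [Complex.mul_im, Complex.add_im, Complex.add_re, Complex.mul_re,
      Complex.ofReal_re, Complex.ofReal_im, Complex.I_re, Complex.I_im]
    ring
  have him2 : t₂.im = -(r * Real.sin θ) := by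
    rw [ht₂]
    simp only [Complex.mul_im, Complex.sub_im, Complex.sub_re, Complex.mul_re,
      Complex.ofReal_re, Complex.ofReal_im, Complex.I_re, Complex.I_im]
    ring
  have him3 : t₃.im = 0 := by simp [t₃, Complex.mul_im]
  have hrs : r * Real.sin θ ≠ 0 := by positivity
  refine ⟨?_, ?_, ?_, ?_, ?_, ?_, ?_⟩
  · intro h
    have := congrArg Complex.im h
    rw [him1, him2] at this
    exact hrs (by linarith)
  · intro h
    have := congrArg Complex.im h
    rw [him1, him3] at this
    exact hrs this
  · intro h
    have := congrArg Complex.im h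
    rw [him2, him3] at this
    exact hrs (by linarith)
  · intro h
    have := congrArg Complex.im h
    rw [him1] at this
    exact hrs (by simpa using this)
  · intro h
    have := congrArg Complex.im h
    rw [him2] at this
    simp only [Complex.zero_im, neg_eq_zero] at this
    exact hrs this
  · simp only [t₃]
    exact mul_ne_zero (by exact_mod_cast hrne) (by exact_mod_cast hqne)
  · intro t
    rw [ht₁, ht₂]
    simp only [t₃]
    set c : ℂ := (Real.cos θ : ℂ)
    set s : ℂ := (Real.sin θ : ℂ)
    have hI : Complex.I ^ 2 = -1 := Complex.I_sq
    linear_combination (z : ℂ) * r * (t - r * (c + s * Complex.I)) *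
        (t - r * (c - s * Complex.I)) * hqc
      + (z : ℂ) * r ^ 2 * s ^ 2 * (t + 2 * r * c) * hI
      - (z : ℂ) * r ^ 2 * (t + 2 * r * c) * h1
      + (z : ℂ) * r ^ 2 * t * h2
      + (t + 1) * h3
      - (t + 1) * (z : ℂ) * (r : ℂ) ^ 3 * hqc
end

section
/- Let a, b, c be real numbers with c ≠ 0, and let {P_m(z)} be the coefficient sequence of the power series expansion of 1/((at²+bt+c)(1−zt)) in t. Then each P_m(z) is a polynomial in z, with P_0 = 1/c, P_1 = −(b−cz)/c², P_2 = (b−cz)²/c³ − (a−bz)/c², and for m ≥ 3, P_m(z) = (1/c)(az P_{m−3}(z) − (a−bz)P_{m−2}(z) − (b−cz)P_{m−1}(z)). -/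
open FormalMultilinearSeries in
lemma zero_coeff (R : ℕ → ℂ) (ε : ℝ) (hε : 0 < ε)
    (h : ∀ t : ℂ, ‖t‖ < ε → HasSum (fun m => R m * t ^ m) 0) : ∀ m, R m = 0 := by
  set p := ofScalars ℂ R with hp
  have hnorm : ∀ n, ‖p n‖ = ‖R n‖ := fun n => ofScalars_norm ..
  set r : ℝ := ε / 2 with hr
  have hrpos : 0 < r := by positivity
  have hrlt : r < ε := by linarith
  have htnorm : ‖((r : ℝ) : ℂ)‖ = r := by
    simp [Complex.norm_real, abs_of_pos hrpos]
  have hsum := h ((r : ℝ) : ℂ) (by rw [htnorm]; exact hrlt)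
  have hb : BddAbove (Set.range fun n => ‖R n * ((r:ℝ):ℂ) ^ n‖) := by
    have := hsum.summable.tendsto_atTop_zero
    exact (this.norm.bddAbove_range)
  obtain ⟨C, hC⟩ := hb
  have hrad : ENNReal.ofReal r ≤ p.radius := by
    have := p.le_radius_of_bound C (r := r.toNNReal) (fun n => by
      have h1 := hC (Set.mem_range_self n)
      rw [norm_mul, norm_pow, htnorm] at h1
      rw [hnorm]
      simpa [Real.coe_toNNReal _ hrpos.le] using h1)
    simpa [ENNReal.ofReal] using this
  have hball : HasFPowerSeriesOnBall (0 : ℂ → ℂ) p 0 (ENNReal.ofReal r) := by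
    refine ⟨hrad, by simpa using hrpos, ?_⟩
    intro y hy
    rw [EMetric.mem_ball, edist_zero_right] at hy
    have hy' : ‖y‖ < ε := by
      have h2 : ‖y‖₊ < r.toNNReal := by
        rw [ENNReal.ofReal] at hy; exact_mod_cast hy
      have h3 : ‖y‖ < r := by
        have := (NNReal.coe_lt_coe).mpr h2
        rwa [coe_nnnorm, Real.coe_toNNReal _ hrpos.le] at this
      linarith
    have := h y hy'
    refine HasSum.congr_fun (by simpa using this) fun n => ?_
    rw [FormalMultilinearSeries.ofScalars_apply_eq, smul_eq_mul, mul_comm]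
  have hat : HasFPowerSeriesAt (0 : ℂ → ℂ) p 0 := ⟨_, hball⟩
  intro m
  have := hat.apply_eq_zero m 1
  rw [FormalMultilinearSeries.ofScalars_apply_eq] at this
  simpa using this

lemma shift_hasSum (f : ℕ → ℂ) (S d t : ℂ) (k : ℕ)
    (h : HasSum (fun m => f m * t ^ m) S) :
    HasSum (fun m => if k ≤ m then d * f (m - k) * t ^ m else 0) (d * t ^ k * S) := by
  have h1 := h.mul_left (d * t ^ k)
  have h2 : HasSum (fun m => if k ≤ m + k then d * f (m + k - k) * t ^ (m + k) else 0)
      (d * t ^ k * S) := by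
    refine h1.congr_fun fun m => ?_
    rw [if_pos (Nat.le_add_left k m), Nat.add_sub_cancel]
    ring
  have := (hasSum_nat_add_iff (f := fun m => if k ≤ m then d * f (m - k) * t ^ m else 0) k).mp h2
  have hz : ∑ i ∈ Finset.range k, (if k ≤ i then d * f (i - k) * t ^ i else 0) = 0 :=
    Finset.sum_eq_zero fun i hi => by
      rw [if_neg]; simp only [Finset.mem_range] at hi; omega
  rwa [hz, add_zero] at this

lemma key_eq (a b c : ℝ) (hc : c ≠ 0) (P : ℕ → ℂ → ℂ)
    (hP : ∀ z : ℂ, ∃ ε > 0, ∀ t : ℂ, ‖t‖ < ε →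
      HasSum (fun m => P m z * t ^ m)
        ((((a : ℂ) * t ^ 2 + (b : ℂ) * t + (c : ℂ)) * (1 - z * t))⁻¹)) :
    ∀ (z : ℂ) (m : ℕ),
      (c : ℂ) * P m z + (if 1 ≤ m then ((b : ℂ) - c * z) * P (m - 1) z else 0)
        + (if 2 ≤ m then ((a : ℂ) - b * z) * P (m - 2) z else 0)
        + (if 3 ≤ m then (-((a : ℂ) * z)) * P (m - 3) z else 0)
        - (if m = 0 then 1 else 0) = 0 := by
  intro z
  obtain ⟨ε, hε, h⟩ := hP z
  set D : ℂ → ℂ := fun t => ((a : ℂ) * t ^ 2 + (b : ℂ) * t + (c : ℂ)) * (1 - z * t) with hD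
  have hD0 : D 0 ≠ 0 := by simp [hD]; exact_mod_cast hc
  have hcont : ContinuousAt D 0 := by fun_prop
  have hev : ∀ᶠ t in nhds (0 : ℂ), D t ≠ 0 := hcont.eventually_ne hD0
  obtain ⟨δ, hδ, hδ'⟩ := Metric.eventually_nhds_iff.mp hev
  set ε' : ℝ := min ε δ with hε'
  have hε'pos : 0 < ε' := lt_min hε hδ
  refine zero_coeff _ ε' hε'pos ?_
  intro t ht
  have ht1 : ‖t‖ < ε := lt_of_lt_of_le ht (min_le_left _ _)
  have htd : dist t 0 < δ := by
    rw [dist_zero_right]; exact lt_of_lt_of_le ht (min_le_right _ _)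
  have ht2 : D t ≠ 0 := hδ' htd
  have hS := h t ht1
  have h0 := shift_hasSum (fun m => P m z) _ (c : ℂ) t 0 hS
  have h1 := shift_hasSum (fun m => P m z) _ ((b : ℂ) - c * z) t 1 hS
  have h2 := shift_hasSum (fun m => P m z) _ ((a : ℂ) - b * z) t 2 hS
  have h3 := shift_hasSum (fun m => P m z) _ (-((a : ℂ) * z)) t 3 hS
  have hsum := ((h0.add h1).add h2).add h3
  have hval : (c : ℂ) * t ^ 0 * (D t)⁻¹ + ((b : ℂ) - c * z) * t ^ 1 * (D t)⁻¹
      + ((a : ℂ) - b * z) * t ^ 2 * (D t)⁻¹ + (-((a : ℂ) * z)) * t ^ 3 * (D t)⁻¹ = 1 := by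
    have : (c : ℂ) * t ^ 0 * (D t)⁻¹ + ((b : ℂ) - c * z) * t ^ 1 * (D t)⁻¹
        + ((a : ℂ) - b * z) * t ^ 2 * (D t)⁻¹ + (-((a : ℂ) * z)) * t ^ 3 * (D t)⁻¹
        = D t * (D t)⁻¹ := by rw [hD]; ring
    rw [this, mul_inv_cancel₀ ht2]
  rw [hval] at hsum
  have hone : HasSum (fun m : ℕ => if m = 0 then (1 : ℂ) else 0) 1 := hasSum_ite_eq 0 1
  have hfinal := hsum.sub hone
  rw [sub_self] at hfinal
  refine HasSum.congr_fun hfinal fun m => ?_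
  rcases m with (_ | _ | _ | n)
  · norm_num
  · norm_num; ring
  · norm_num; ring
  · have e1 : (1:ℕ) ≤ n + 3 := by omega
    have e2 : (2:ℕ) ≤ n + 3 := by omega
    have e3 : (3:ℕ) ≤ n + 3 := by omega
    have e0 : ¬ (n + 3 = 0) := by omega
    simp only [if_pos e1, if_pos e2, if_pos e3, if_neg e0, if_pos (Nat.zero_le (n+3)),
      Nat.sub_zero]
    ring

/-- If `c ≠ 0` and `{P_m}` is the coefficient sequence of the power-series
expansion of `1/((at²+bt+c)(1-zt))` in `t`, then each `P_m` is a polynomial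
in `z` with the stated initial values and three-term recurrence. -/
theorem stmt_10 (a b c : ℝ) (hc : c ≠ 0) (P : ℕ → ℂ → ℂ)
    (hP : ∀ z : ℂ, ∃ ε > 0, ∀ t : ℂ, ‖t‖ < ε →
      HasSum (fun m => P m z * t ^ m)
        ((((a : ℂ) * t ^ 2 + (b : ℂ) * t + (c : ℂ)) * (1 - z * t))⁻¹)) :
    (∀ m : ℕ, ∃ p : Polynomial ℂ, ∀ z : ℂ, P m z = p.eval z) ∧
    (∀ z : ℂ, P 0 z = 1 / (c : ℂ)) ∧
    (∀ z : ℂ, P 1 z = -((b : ℂ) - (c : ℂ) * z) / (c : ℂ) ^ 2) ∧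
    (∀ z : ℂ, P 2 z = ((b : ℂ) - (c : ℂ) * z) ^ 2 / (c : ℂ) ^ 3
      - ((a : ℂ) - (b : ℂ) * z) / (c : ℂ) ^ 2) ∧
    (∀ m : ℕ, 3 ≤ m → ∀ z : ℂ, P m z = (1 / (c : ℂ)) *
      ((a : ℂ) * z * P (m - 3) z - ((a : ℂ) - (b : ℂ) * z) * P (m - 2) z
        - ((b : ℂ) - (c : ℂ) * z) * P (m - 1) z)) := by
  have hcc : (c : ℂ) ≠ 0 := by exact_mod_cast hc
  have hE := key_eq a b c hc P hP
  have h0 : ∀ z : ℂ, P 0 z = 1 / (c : ℂ) := by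
    intro z
    have e := hE z 0
    norm_num at e
    rw [eq_div_iff hcc]
    linear_combination e
  have h1 : ∀ z : ℂ, P 1 z = -((b : ℂ) - (c : ℂ) * z) / (c : ℂ) ^ 2 := by
    intro z
    have e := hE z 1
    norm_num [h0 z] at e
    rw [eq_div_iff (pow_ne_zero 2 hcc)]
    field_simp at e
    linear_combination e
  have h2 : ∀ z : ℂ, P 2 z = ((b : ℂ) - (c : ℂ) * z) ^ 2 / (c : ℂ) ^ 3
      - ((a : ℂ) - (b : ℂ) * z) / (c : ℂ) ^ 2 := by
    intro z
    have e := hE z 2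
    norm_num [h0 z, h1 z] at e
    field_simp at e ⊢
    linear_combination e
  have hrec : ∀ m : ℕ, 3 ≤ m → ∀ z : ℂ, P m z = (1 / (c : ℂ)) *
      ((a : ℂ) * z * P (m - 3) z - ((a : ℂ) - (b : ℂ) * z) * P (m - 2) z
        - ((b : ℂ) - (c : ℂ) * z) * P (m - 1) z) := by
    intro m hm z
    have e := hE z m
    have e1 : 1 ≤ m := by omega
    have e2 : 2 ≤ m := by omega
    have e0 : ¬ (m = 0) := by omega
    rw [if_pos e1, if_pos e2, if_pos hm, if_neg e0] at e
    field_simp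
    linear_combination e
  refine ⟨?_, h0, h1, h2, hrec⟩
  intro m
  induction m using Nat.strong_induction_on with
  | _ m ih =>
    match m, ih with
    | 0, _ => exact ⟨Polynomial.C (1 / (c : ℂ)), fun z => by simp [h0 z]⟩
    | 1, _ =>
      refine ⟨Polynomial.C (-(1 : ℂ) / c ^ 2) * (Polynomial.C (b : ℂ)
        - Polynomial.C (c : ℂ) * Polynomial.X), fun z => ?_⟩
      simp [h1 z]
      ring
    | 2, _ =>
      refine ⟨Polynomial.C ((1 : ℂ) / c ^ 3) * (Polynomial.C (b : ℂ)
        - Polynomial.C (c : ℂ) * Polynomial.X) ^ 2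
        - Polynomial.C ((1 : ℂ) / c ^ 2) * (Polynomial.C (a : ℂ)
        - Polynomial.C (b : ℂ) * Polynomial.X), fun z => ?_⟩
      simp [h2 z]
      ring
    | (n + 3), ih =>
      obtain ⟨p3, hp3⟩ := ih n (by omega)
      obtain ⟨p2, hp2⟩ := ih (n + 1) (by omega)
      obtain ⟨p1, hp1⟩ := ih (n + 2) (by omega)
      refine ⟨Polynomial.C ((1 : ℂ) / c) * (Polynomial.C (a : ℂ) * Polynomial.X * p3
        - (Polynomial.C (a : ℂ) - Polynomial.C (b : ℂ) * Polynomial.X) * p2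
        - (Polynomial.C (b : ℂ) - Polynomial.C (c : ℂ) * Polynomial.X) * p1), fun z => ?_⟩
      have := hrec (n + 3) (by omega) z
      simp only [Nat.add_sub_cancel, show n + 3 - 2 = n + 1 by omega,
        show n + 3 - 1 = n + 2 by omega] at this
      simp [this, hp1 z, hp2 z, hp3 z]
end

section
/- Let a, b, c ∈ ℝ with ac < 0 and b ≠ 0, and let {P_m(z)} be generated by 1/((at²+bt+c)(1−tz)). Then for every m ≥ 0, all zeros of the polynomial P_m(z) lie in the closed disk {z : |z| ≤ 1/|α|}, where α is the root of at²+bt+c of smallest modulus. -/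
open Finset

private lemma absub' {x y : ℝ} (h : x * y < 0) : |x - y| = |x| + |y| := by
  rcases lt_trichotomy x 0 with hx | hx | hx
  · have hy : 0 < y := by nlinarith
    rw [abs_of_neg hx, abs_of_pos hy, abs_of_neg (by linarith)]; ring
  · simp [hx] at h
  · have hy : y < 0 := by nlinarith
    rw [abs_of_pos hx, abs_of_neg hy, abs_of_pos (by linarith)]; ring

private lemma claims' (U V Z P Q R : ℝ) (hV : 0 < V) (hUV : V < U) (hUZ : U < Z)
    (hR : 0 < R) (hRQ : R ≤ Q) (hQP : Q ≤ P) :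
    Q*U*U*V < V*(P*Z*Z) ∧ Q*U*U*Z + R*V*V*Z - U*(R*V*V) < U*(P*Z*Z) ∧ U*(R*V*V) ≤ Z*(R*V*V) := by
  have hU : 0 < U := hV.trans hUV
  have hZ : 0 < Z := hU.trans hUZ
  have hP : 0 < P := lt_of_lt_of_le (lt_of_lt_of_le hR hRQ) hQP
  have hQ : 0 < Q := lt_of_lt_of_le hR hRQ
  have key : Q*U*U < P*Z*Z := by
    nlinarith [mul_le_mul_of_nonneg_right (mul_le_mul_of_nonneg_right hQP hU.le) hU.le,
      mul_lt_mul_of_pos_left hUZ (mul_pos hP hU), mul_lt_mul_of_pos_left hUZ (mul_pos hP hZ)]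
  have c1 : Q*U*U*V < V*(P*Z*Z) := by
    have := mul_lt_mul_of_pos_right key hV; nlinarith
  have c3 : U*(R*V*V) ≤ Z*(R*V*V) :=
    mul_le_mul_of_nonneg_right hUZ.le (by positivity)
  refine ⟨c1, ?_, c3⟩
  have t1 : U*Z*(Q*(Z-U)) ≤ U*Z*(P*Z - Q*U) := by
    have h2 : Q*(Z-U) ≤ P*Z - Q*U := by nlinarith [mul_le_mul_of_nonneg_right hQP hZ.le]
    exact mul_le_mul_of_nonneg_left h2 (mul_pos hU hZ).le
  have t2 : R*V*V < Q*U*Z := by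
    nlinarith [mul_le_mul_of_nonneg_right (mul_le_mul_of_nonneg_right hRQ hV.le) hV.le,
      mul_lt_mul_of_pos_left hUV (mul_pos hQ hV), mul_lt_mul_of_pos_left hUZ (mul_pos hQ hU),
      mul_lt_mul_of_pos_left (hUV.trans hUZ) (mul_pos hQ hU)]
  have t3 : R*V*V*(Z-U) < U*Z*(Q*(Z-U)) := by
    have := mul_lt_mul_of_pos_right t2 (sub_pos.2 hUZ)
    nlinarith
  nlinarith

private lemma even_case' (U V Z : ℝ) (m : ℕ) (hV : 0 < V) (hUV : V < U) (hUZ : U < Z)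
    (h : (U+V)*Z^(m+2) ≤ (U^(m+2)-V^(m+2))*Z + U*V*(U^(m+1)+V^(m+1))) : False := by
  have hU : 0 < U := hV.trans hUV
  obtain ⟨c1, c2, c3⟩ := claims' U V Z (Z^m) (U^m) (V^m) hV hUV hUZ (pow_pos hV m)
    (pow_le_pow_left₀ hV.le hUV.le m) (pow_le_pow_left₀ hU.le hUZ.le m)
  simp only [pow_succ] at h
  nlinarith [c1, c2, c3]

private lemma odd_case' (U V Z : ℝ) (m : ℕ) (hV : 0 < V) (hUV : V < U) (hUZ : U < Z)
    (h : (U+V)*Z^(m+2) ≤ (U^(m+2)+V^(m+2))*Z + U*V*(U^(m+1)-V^(m+1))) : False := by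
  have hU : 0 < U := hV.trans hUV
  obtain ⟨c1, c2, c3⟩ := claims' U V Z (Z^m) (U^m) (V^m) hV hUV hUZ (pow_pos hV m)
    (pow_le_pow_left₀ hV.le hUV.le m) (pow_le_pow_left₀ hU.le hUZ.le m)
  simp only [pow_succ] at h
  nlinarith [c1, c2, c3]

private lemma norm_contra' (u v : ℝ) (z : ℂ) (m : ℕ) (huv : u * v < 0) (hvu : |v| < |u|)
    (hz : |u| < ‖z‖)
    (heq : ((v:ℂ) - u) * z^(m+2)
      = ((v:ℂ)^(m+2) - (u:ℂ)^(m+2))*z - ((u:ℂ)*v)*((v:ℂ)^(m+1) - (u:ℂ)^(m+1))) : False := by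
  have hv : v ≠ 0 := by rintro rfl; simp at huv
  have hV : 0 < |v| := abs_pos.2 hv
  have hL : ‖((v:ℂ) - u) * z^(m+2)‖ = (|u| + |v|) * ‖z‖^(m+2) := by
    rw [norm_mul, norm_pow]
    congr 1
    rw [show ((v:ℂ) - u) = ((v - u : ℝ) : ℂ) by push_cast; ring, Complex.norm_real,
      Real.norm_eq_abs, absub' (by nlinarith)]
    ring
  have hR : ‖((v:ℂ)^(m+2) - (u:ℂ)^(m+2))*z - ((u:ℂ)*v)*((v:ℂ)^(m+1) - (u:ℂ)^(m+1))‖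
      ≤ |v^(m+2) - u^(m+2)| * ‖z‖ + (|u| * |v|) * |v^(m+1) - u^(m+1)| := by
    calc _ ≤ ‖((v:ℂ)^(m+2) - (u:ℂ)^(m+2))*z‖ + ‖((u:ℂ)*v)*((v:ℂ)^(m+1) - (u:ℂ)^(m+1))‖ :=
          norm_sub_le _ _
    _ ≤ _ := by
        rw [norm_mul, norm_mul]
        gcongr
        · rw [show ((v:ℂ)^(m+2) - (u:ℂ)^(m+2)) = ((v^(m+2) - u^(m+2) : ℝ) : ℂ) by push_cast; ring,
            Complex.norm_real, Real.norm_eq_abs]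
        · rw [show ((u:ℂ)*v) = ((u*v : ℝ) : ℂ) by push_cast; ring, Complex.norm_real,
            Real.norm_eq_abs, abs_mul]
        · rw [show ((v:ℂ)^(m+1) - (u:ℂ)^(m+1)) = ((v^(m+1) - u^(m+1) : ℝ) : ℂ) by push_cast; ring,
            Complex.norm_real, Real.norm_eq_abs]
  rw [heq] at hL
  have hmain : (|u| + |v|) * ‖z‖^(m+2)
      ≤ |v^(m+2) - u^(m+2)| * ‖z‖ + (|u| * |v|) * |v^(m+1) - u^(m+1)| := hL ▸ hR
  rcases Nat.even_or_odd m with hm | hm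
  · have h2 : Even (m+2) := by rcases hm with ⟨k, hk⟩; exact ⟨k+1, by omega⟩
    have h1 : Odd (m+1) := by rcases hm with ⟨k, hk⟩; exact ⟨k, by omega⟩
    have ev : |v^(m+2) - u^(m+2)| = |u|^(m+2) - |v|^(m+2) := by
      rw [show v^(m+2) = |v|^(m+2) from (h2.pow_abs v).symm,
        show u^(m+2) = |u|^(m+2) from (h2.pow_abs u).symm, abs_sub_comm,
        abs_of_nonneg (sub_nonneg.2 (pow_le_pow_left₀ (abs_nonneg v) hvu.le _))]
    have od : |v^(m+1) - u^(m+1)| = |v|^(m+1) + |u|^(m+1) := by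
      rw [absub' (by
        have : (v*u)^(m+1) < 0 := h1.pow_neg (by nlinarith)
        calc v^(m+1) * u^(m+1) = (v*u)^(m+1) := (mul_pow v u (m+1)).symm
        _ < 0 := this), abs_pow, abs_pow]
    rw [ev, od] at hmain
    exact even_case' |u| |v| ‖z‖ m hV hvu hz (by linarith [hmain])
  · have h2 : Odd (m+2) := by rcases hm with ⟨k, hk⟩; exact ⟨k+1, by omega⟩
    have h1 : Even (m+1) := by rcases hm with ⟨k, hk⟩; exact ⟨k+1, by omega⟩
    have ev : |v^(m+2) - u^(m+2)| = |v|^(m+2) + |u|^(m+2) := by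
      rw [absub' (by
        have : (v*u)^(m+2) < 0 := h2.pow_neg (by nlinarith)
        calc v^(m+2) * u^(m+2) = (v*u)^(m+2) := (mul_pow v u (m+2)).symm
        _ < 0 := this), abs_pow, abs_pow]
    have od : |v^(m+1) - u^(m+1)| = |u|^(m+1) - |v|^(m+1) := by
      rw [show v^(m+1) = |v|^(m+1) from (h1.pow_abs v).symm,
        show u^(m+1) = |u|^(m+1) from (h1.pow_abs u).symm, abs_sub_comm,
        abs_of_nonneg (sub_nonneg.2 (pow_le_pow_left₀ (abs_nonneg v) hvu.le _))]
    rw [ev, od] at hmain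
    exact odd_case' |u| |v| ‖z‖ m hV hvu hz (by linarith [hmain])

private lemma coeff_unique' (d : ℕ → ℂ) (δ : ℝ) (hδ : 0 < δ)
    (h : ∀ t : ℂ, ‖t‖ < δ → HasSum (fun n => d n * t^n) (0:ℂ)) : ∀ n, d n = 0 := by
  have hp : HasFPowerSeriesAt (0 : ℂ → ℂ) (FormalMultilinearSeries.ofScalars ℂ d) 0 := by
    rw [hasFPowerSeriesAt_iff]
    refine Metric.eventually_nhds_iff.2 ⟨δ, hδ, fun {t} ht => ?_⟩
    rw [dist_zero_right] at ht
    have h2 := h t ht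
    have hc : ∀ n, (FormalMultilinearSeries.ofScalars ℂ d).coeff n = d n := by
      intro n
      simp [FormalMultilinearSeries.coeff, FormalMultilinearSeries.ofScalars, List.prod_ofFn]
    simp only [hc, smul_eq_mul, Pi.zero_apply]
    exact h2.congr_fun fun n => by ring
  intro n
  have h2 := congrFun hp.eq_zero n
  rw [show ((0 : FormalMultilinearSeries ℂ ℂ ℂ) n) = 0 from rfl] at h2
  rwa [FormalMultilinearSeries.ofScalars_eq_zero] at h2

private lemma hasSum_rep' (a b c α β : ℝ) (ha : a ≠ 0) (hα0 : α ≠ 0) (hβ0 : β ≠ 0) (hαβ : α ≠ β)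
    (hbr : b = -(a*(α+β))) (hcr : c = a*α*β) (z0 t : ℂ)
    (ht1 : ‖t‖ < |α|) (ht2 : ‖t‖ < |β|) (ht3 : ‖t * z0‖ < 1) :
    HasSum (fun n => (((a:ℂ)*((α:ℂ)-(β:ℂ)))⁻¹ *
        ∑ k ∈ range (n+1), (((β:ℂ)⁻¹)^(k+1) - ((α:ℂ)⁻¹)^(k+1)) * z0^(n-k)) * t^n)
      ((((a:ℂ)*t^2 + (b:ℂ)*t + (c:ℂ)) * (1 - t*z0))⁻¹) := by
  have hαc : (α:ℂ) ≠ 0 := Complex.ofReal_ne_zero.2 hα0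
  have hβc : (β:ℂ) ≠ 0 := Complex.ofReal_ne_zero.2 hβ0
  have hac : (a:ℂ) ≠ 0 := Complex.ofReal_ne_zero.2 ha
  have hαβc : (α:ℂ) - (β:ℂ) ≠ 0 := sub_ne_zero.2 (by exact_mod_cast hαβ)
  have hnα : ‖(α:ℂ)⁻¹ * t‖ < 1 := by
    rw [norm_mul, norm_inv, Complex.norm_real, Real.norm_eq_abs]
    have h1 : ‖t‖ / |α| < 1 := (div_lt_one (abs_pos.2 hα0)).2 ht1
    rw [div_eq_inv_mul] at h1; exact h1
  have hnβ : ‖(β:ℂ)⁻¹ * t‖ < 1 := by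
    rw [norm_mul, norm_inv, Complex.norm_real, Real.norm_eq_abs]
    have h1 : ‖t‖ / |β| < 1 := (div_lt_one (abs_pos.2 hβ0)).2 ht2
    rw [div_eq_inv_mul] at h1; exact h1
  have hαt : (α:ℂ) - t ≠ 0 := by
    refine sub_ne_zero.2 fun h => ?_
    rw [← h, Complex.norm_real, Real.norm_eq_abs] at ht1; exact lt_irrefl _ ht1
  have hβt : (β:ℂ) - t ≠ 0 := by
    refine sub_ne_zero.2 fun h => ?_
    rw [← h, Complex.norm_real, Real.norm_eq_abs] at ht2; exact lt_irrefl _ ht2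
  have g1 : HasSum (fun k => ((α:ℂ)⁻¹)^(k+1) * t^k) (((α:ℂ) - t)⁻¹) := by
    have h := (hasSum_geometric_of_norm_lt_one hnα).mul_left ((α:ℂ)⁻¹)
    have hval : (α:ℂ)⁻¹ * (1 - (α:ℂ)⁻¹*t)⁻¹ = ((α:ℂ) - t)⁻¹ := by
      rw [show ((α:ℂ) - t) = (α:ℂ) * (1 - (α:ℂ)⁻¹*t) by field_simp, mul_inv]
    exact hval ▸ (h.congr_fun fun k => by rw [mul_pow]; ring)
  have g2 : HasSum (fun k => ((β:ℂ)⁻¹)^(k+1) * t^k) (((β:ℂ) - t)⁻¹) := by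
    have h := (hasSum_geometric_of_norm_lt_one hnβ).mul_left ((β:ℂ)⁻¹)
    have hval : (β:ℂ)⁻¹ * (1 - (β:ℂ)⁻¹*t)⁻¹ = ((β:ℂ) - t)⁻¹ := by
      rw [show ((β:ℂ) - t) = (β:ℂ) * (1 - (β:ℂ)⁻¹*t) by field_simp, mul_inv]
    exact hval ▸ (h.congr_fun fun k => by rw [mul_pow]; ring)
  have hF1 : HasSum (fun k => (((β:ℂ)⁻¹)^(k+1) - ((α:ℂ)⁻¹)^(k+1)) * t^k)
      (((β:ℂ) - t)⁻¹ - ((α:ℂ) - t)⁻¹) := (g2.sub g1).congr_fun fun k => by ring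
  have snα : Summable (fun k => ‖((α:ℂ)⁻¹)^(k+1) * t^k‖) := by
    have he : ∀ k, ‖((α:ℂ)⁻¹)^(k+1) * t^k‖ = ‖(α:ℂ)⁻¹‖ * (‖(α:ℂ)⁻¹‖*‖t‖)^k := fun k => by
      rw [norm_mul, norm_pow, norm_pow, mul_pow, pow_succ]; ring
    simp_rw [he]
    exact (summable_geometric_of_lt_one (by positivity) (by rw [← norm_mul]; exact hnα)).mul_left _
  have snβ : Summable (fun k => ‖((β:ℂ)⁻¹)^(k+1) * t^k‖) := by
    have he : ∀ k, ‖((β:ℂ)⁻¹)^(k+1) * t^k‖ = ‖(β:ℂ)⁻¹‖ * (‖(β:ℂ)⁻¹‖*‖t‖)^k := fun k => by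
      rw [norm_mul, norm_pow, norm_pow, mul_pow, pow_succ]; ring
    simp_rw [he]
    exact (summable_geometric_of_lt_one (by positivity) (by rw [← norm_mul]; exact hnβ)).mul_left _
  have hF1n : Summable (fun k => ‖(((β:ℂ)⁻¹)^(k+1) - ((α:ℂ)⁻¹)^(k+1)) * t^k‖) :=
    Summable.of_nonneg_of_le (fun _ => norm_nonneg _)
      (fun k => by rw [sub_mul]; exact norm_sub_le _ _) (snβ.add snα)
  have hGn : Summable (fun j => ‖(t*z0)^j‖) := by
    simp_rw [norm_pow]; exact summable_geometric_of_lt_one (norm_nonneg _) ht3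
  have hG : HasSum (fun j => (t*z0)^j) ((1 - t*z0)⁻¹) := hasSum_geometric_of_norm_lt_one ht3
  have hProd := hasSum_sum_range_mul_of_summable_norm hF1n hGn
  rw [hF1.tsum_eq, hG.tsum_eq] at hProd
  have hProd2 : HasSum
      (fun n => (∑ k ∈ range (n+1), (((β:ℂ)⁻¹)^(k+1) - ((α:ℂ)⁻¹)^(k+1)) * z0^(n-k)) * t^n)
      ((((β:ℂ) - t)⁻¹ - ((α:ℂ) - t)⁻¹) * (1 - t*z0)⁻¹) := by
    refine hProd.congr_fun fun n => ?_
    rw [Finset.sum_mul]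
    refine Finset.sum_congr rfl fun k hk => ?_
    have hk' : k ≤ n := Nat.lt_succ_iff.mp (Finset.mem_range.mp hk)
    rw [mul_pow, show t^n = t^k * t^(n-k) by rw [← pow_add, Nat.add_sub_cancel' hk']]
    ring
  have hFinal := hProd2.mul_left (((a:ℂ)*((α:ℂ)-(β:ℂ)))⁻¹)
  have hval : (((a:ℂ)*((α:ℂ)-(β:ℂ)))⁻¹ * ((((β:ℂ) - t)⁻¹ - ((α:ℂ) - t)⁻¹) * (1 - t*z0)⁻¹))
      = (((a:ℂ)*t^2 + (b:ℂ)*t + (c:ℂ)) * (1 - t*z0))⁻¹ := by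
    have hb' : (b:ℂ) = -((a:ℂ)*((α:ℂ)+(β:ℂ))) := by rw [hbr]; push_cast; ring
    have hc' : (c:ℂ) = (a:ℂ)*(α:ℂ)*(β:ℂ) := by rw [hcr]; push_cast; ring
    have hquadc : (a:ℂ)*t^2 + (b:ℂ)*t + (c:ℂ) = (a:ℂ)*(((α:ℂ)-t)*((β:ℂ)-t)) := by
      rw [hb', hc']; ring
    have h1z : (1:ℂ) - t*z0 ≠ 0 := by
      refine sub_ne_zero.2 fun h => ?_
      rw [← h] at ht3; simp at ht3
    rw [hquadc]
    field_simp
    ring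
  exact hval ▸ (hFinal.congr_fun fun n => by ring)

/-- If `ac < 0`, `b ≠ 0`, `{P_m}` is generated by `1/((at²+bt+c)(1-tz))`, and
`α` is the (real) root of `at²+bt+c` of smallest modulus, then every zero of
`P_m` lies in the closed disk of radius `1/|α|`. -/
theorem stmt_14 (a b c : ℝ) (hac : a * c < 0) (hb : b ≠ 0)
    (α : ℝ) (hα : a * α ^ 2 + b * α + c = 0)
    (hmin : ∀ β : ℝ, a * β ^ 2 + b * β + c = 0 → |α| ≤ |β|)
    (P : ℕ → ℂ → ℂ)
    (hP : ∀ z : ℂ, ∃ ε > 0, ∀ t : ℂ, ‖t‖ < ε →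
      HasSum (fun m => P m z * t ^ m)
        ((((a : ℂ) * t ^ 2 + (b : ℂ) * t + (c : ℂ)) * (1 - t * z))⁻¹)) :
    ∀ m : ℕ, ∀ z : ℂ, P m z = 0 → ‖z‖ ≤ 1 / |α| := by
  have ha : a ≠ 0 := by rintro rfl; simp at hac
  have hc : c ≠ 0 := by rintro rfl; simp at hac
  have hα0 : α ≠ 0 := by rintro rfl; simp at hα; exact hc hα
  set β : ℝ := c / (a * α) with hβdef
  have hcr : c = a*α*β := by rw [hβdef, mul_div_assoc', eq_div_iff (mul_ne_zero ha hα0), mul_comm]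
  have hβ0 : β ≠ 0 := by
    intro h; rw [h, mul_zero] at hcr; exact hc hcr
  have hαβneg : α * β < 0 := by
    by_contra h
    push_neg at h
    have h2 : a*c = a^2*(α*β) := by rw [hcr]; ring
    linarith [mul_nonneg (sq_nonneg a) h, h2, hac]
  have hβroot : a * β ^ 2 + b * β + c = 0 := by
    rw [hβdef]
    field_simp
    linear_combination c * hα
  have hαβ : α ≠ β := by
    intro h
    rw [← h] at hαβneg
    nlinarith [sq_nonneg α]
  have hbr : b = -(a*(α+β)) := by
    have h2 : α * (b + a*(α+β)) = 0 := by linear_combination hα - hcr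
    rcases mul_eq_zero.1 h2 with h3 | h3
    · exact absurd h3 hα0
    · linarith
  have habs : |α| < |β| := by
    rcases (hmin β hβroot).lt_or_eq with h | h
    · exact h
    · rcases abs_eq_abs.1 h with h2 | h2
      · exact absurd h2.symm (Ne.symm hαβ)
      · exfalso
        rw [h2] at hα
        have h3 : 2*(b*β) = 0 := by linear_combination hβroot - hα
        have h4 : b = 0 := by
          rcases mul_eq_zero.1 (by linarith : b * β = 0) with h5 | h5
          · exact h5
          · exact absurd h5 hβ0
        exact hb h4
  intro m z0 hzero
  by_contra hcon
  push_neg at hcon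
  have hz0 : (0:ℝ) < ‖z0‖ := by
    have : (0:ℝ) < 1/|α| := by positivity
    linarith
  have hz0ne : z0 ≠ 0 := by simpa [norm_pos_iff] using hz0
  obtain ⟨ε, hε, hsum⟩ := hP z0
  set δ : ℝ := min ε (min (min |α| |β|) ‖z0‖⁻¹) with hδdef
  have hδ : 0 < δ := by
    have h1 : (0:ℝ) < |α| := abs_pos.2 hα0
    have h2 : (0:ℝ) < |β| := abs_pos.2 hβ0
    have h3 : (0:ℝ) < ‖z0‖⁻¹ := by positivity
    simp only [hδdef, lt_min_iff]
    exact ⟨hε, ⟨h1, h2⟩, h3⟩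
  -- both series represent the same function on the ball of radius δ
  have hd : ∀ n : ℕ, P n z0 - (((a:ℂ)*((α:ℂ)-(β:ℂ)))⁻¹ *
      ∑ k ∈ range (n+1), (((β:ℂ)⁻¹)^(k+1) - ((α:ℂ)⁻¹)^(k+1)) * z0^(n-k)) = 0 := by
    refine coeff_unique' _ δ hδ fun t ht => ?_
    have ht1 : ‖t‖ < ε := lt_of_lt_of_le ht (min_le_left _ _)
    have ht2 : ‖t‖ < |α| :=
      lt_of_lt_of_le ht (le_trans (le_trans (min_le_right _ _) (min_le_left _ _)) (min_le_left _ _))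
    have ht3 : ‖t‖ < |β| :=
      lt_of_lt_of_le ht (le_trans (le_trans (min_le_right _ _) (min_le_left _ _)) (min_le_right _ _))
    have ht4 : ‖t * z0‖ < 1 := by
      have h5 : ‖t‖ < ‖z0‖⁻¹ := lt_of_lt_of_le ht (le_trans (min_le_right _ _) (min_le_right _ _))
      have := mul_lt_mul_of_pos_right h5 hz0
      rw [inv_mul_cancel₀ (ne_of_gt hz0)] at this
      rw [norm_mul]; exact this
    have hA := hsum t ht1
    have hB := hasSum_rep' a b c α β ha hα0 hβ0 hαβ hbr hcr z0 t ht2 ht3 ht4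
    have := hA.sub hB
    rw [sub_self] at this
    exact this.congr_fun fun n => by ring
  have hKne : ((a:ℂ)*((α:ℂ)-(β:ℂ)))⁻¹ ≠ 0 := by
    apply inv_ne_zero
    exact mul_ne_zero (Complex.ofReal_ne_zero.2 ha) (sub_ne_zero.2 (by exact_mod_cast hαβ))
  have hT0 : (∑ k ∈ range (m+1), (((β:ℂ)⁻¹)^(k+1) - ((α:ℂ)⁻¹)^(k+1)) * z0^(m-k)) = 0 := by
    have h1 := hd m
    rw [hzero, zero_sub, neg_eq_zero] at h1
    rcases mul_eq_zero.1 h1 with h2 | h2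
    · exact absurd h2 hKne
    · exact h2
  -- derive the key polynomial equation
  have hgu := geom_sum₂_mul ((α:ℂ)⁻¹) z0 (m+1)
  have hgv := geom_sum₂_mul ((β:ℂ)⁻¹) z0 (m+1)
  simp only [Nat.add_sub_cancel] at hgu hgv
  have hTsplit : (∑ k ∈ range (m+1), (((β:ℂ)⁻¹)^(k+1) - ((α:ℂ)⁻¹)^(k+1)) * z0^(m-k))
      = (β:ℂ)⁻¹ * (∑ i ∈ range (m+1), ((β:ℂ)⁻¹)^i * z0^(m-i))
        - (α:ℂ)⁻¹ * (∑ i ∈ range (m+1), ((α:ℂ)⁻¹)^i * z0^(m-i)) := by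
    rw [Finset.mul_sum, Finset.mul_sum, ← Finset.sum_sub_distrib]
    exact Finset.sum_congr rfl fun k _ => by ring
  rw [hTsplit] at hT0
  have hE : (β:ℂ)⁻¹ * (((β:ℂ)⁻¹)^(m+1) - z0^(m+1)) * ((α:ℂ)⁻¹ - z0)
      = (α:ℂ)⁻¹ * (((α:ℂ)⁻¹)^(m+1) - z0^(m+1)) * ((β:ℂ)⁻¹ - z0) := by
    linear_combination (-((β:ℂ)⁻¹ * ((α:ℂ)⁻¹ - z0))) * hgv
      + ((α:ℂ)⁻¹ * ((β:ℂ)⁻¹ - z0)) * hgu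
      + (((β:ℂ)⁻¹ - z0) * ((α:ℂ)⁻¹ - z0)) * hT0
  -- contradiction via norms
  refine norm_contra' α⁻¹ β⁻¹ z0 m ?_ ?_ ?_ ?_
  · rw [← mul_inv]; exact inv_lt_zero.2 hαβneg
  · rw [abs_inv, abs_inv]
    exact inv_strictAnti₀ (abs_pos.2 hα0) habs
  · rw [abs_inv, ← one_div]; exact hcon
  · push_cast
    linear_combination hE
end

section
/- Let a, b, c ∈ ℝ with ac > 0 and b² − 4ac > 0, and let {P_m(z)} be generated by 1/((at²+bt+c)(1−tz)). Then for every m ≥ 0, no zero of P_m(z) lies in the open ball {z : |z| < 1/|α|}, where α is the root of at²+bt+c of smallest modulus. -/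
open Finset

/-- Coefficients of `1/((1-xt)(1-yt))`. -/
noncomputable def hcoef (x y : ℝ) (j : ℕ) : ℝ :=
  ∑ i ∈ Finset.range (j + 1), x ^ i * y ^ (j - i)

lemma hcoef_zero (x y : ℝ) : hcoef x y 0 = 1 := by simp [hcoef]

lemma hcoef_succ (x y : ℝ) (j : ℕ) :
    hcoef x y (j + 1) = x * hcoef x y j + y ^ (j + 1) := by
  rw [hcoef, Finset.sum_range_succ', hcoef, Finset.mul_sum]
  congr 1
  · apply Finset.sum_congr rfl
    intro i hi
    have : j + 1 - (i + 1) = j - i := by omega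
    rw [this]; ring
  · simp

lemma hcoef_nonneg {x y : ℝ} (hx : 0 ≤ x) (hy : 0 ≤ y) (j : ℕ) : 0 ≤ hcoef x y j := by
  apply Finset.sum_nonneg
  intro i _
  positivity

/-- Eneström–Kakeya style zero-free region. -/
lemma EK {x y : ℝ} (hy : 0 < y) (hyx : y ≤ x) (m : ℕ) {z : ℂ}
    (hz : ‖z‖ < x) :
    (∑ k ∈ Finset.range (m + 1), (hcoef x y k : ℂ) * z ^ (m - k)) ≠ 0 := by
  have hx : 0 < x := lt_of_lt_of_le hy hyx
  set T : ℕ → ℂ := fun m => ∑ k ∈ Finset.range (m + 1), (hcoef x y k : ℂ) * z ^ (m - k) with hT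
  set g : ℕ → ℂ := fun m => ∑ k ∈ Finset.range (m + 1), ((y : ℂ)) ^ k * z ^ (m - k) with hg
  have hTrec : ∀ n, T (n + 1) = z * T n + (hcoef x y (n + 1) : ℂ) := by
    intro n
    rw [hT]
    simp only
    rw [Finset.sum_range_succ, Finset.mul_sum]
    congr 1
    · apply Finset.sum_congr rfl
      intro k hk
      have hk' : k ≤ n := Finset.mem_range_succ_iff.mp hk
      have : n + 1 - k = (n - k) + 1 := by omega
      rw [this]; ring
    · simp
  have hgrec : ∀ n, g (n + 1) = z * g n + ((y : ℂ)) ^ (n + 1) := by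
    intro n
    rw [hg]
    simp only
    rw [Finset.sum_range_succ, Finset.mul_sum]
    congr 1
    · apply Finset.sum_congr rfl
      intro k hk
      have hk' : k ≤ n := Finset.mem_range_succ_iff.mp hk
      have : n + 1 - k = (n - k) + 1 := by omega
      rw [this]; ring
    · simp
  have key : ∀ n, ((x : ℂ) - z) * T n = (x : ℂ) * (hcoef x y n : ℂ) - z * g n := by
    intro n
    induction n with
    | zero => simp [hT, hg, hcoef_zero]
    | succ n ih =>
      have hrec : (hcoef x y (n + 1) : ℂ) = (x : ℂ) * (hcoef x y n : ℂ) + (y : ℂ) ^ (n + 1) := by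
        push_cast [hcoef_succ]; ring
      rw [hTrec n, hgrec n, hrec]
      linear_combination z * ih
  intro h0
  have heq : (x : ℂ) * (hcoef x y m : ℂ) = z * g m := by
    have h := key m
    rw [show T m = 0 from h0, mul_zero] at h
    linear_combination -h
  have hnorm : x * hcoef x y m ≤ ‖z‖ * ∑ k ∈ Finset.range (m + 1), y ^ k * ‖z‖ ^ (m - k) := by
    have h1 : ‖(x : ℂ) * (hcoef x y m : ℂ)‖ = x * hcoef x y m := by
      rw [← Complex.ofReal_mul, Complex.norm_real, Real.norm_eq_abs, abs_of_nonneg]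
      exact mul_nonneg hx.le (hcoef_nonneg hx.le hy.le m)
    have h2 : ‖g m‖ ≤ ∑ k ∈ Finset.range (m + 1), y ^ k * ‖z‖ ^ (m - k) := by
      refine le_trans (norm_sum_le _ _) (le_of_eq ?_)
      apply Finset.sum_congr rfl
      intro k _
      rw [norm_mul, norm_pow, norm_pow, Complex.norm_real, Real.norm_eq_abs,
        abs_of_nonneg hy.le]
    calc x * hcoef x y m = ‖(x : ℂ) * (hcoef x y m : ℂ)‖ := h1.symm
      _ = ‖z * g m‖ := by rw [heq]
      _ = ‖z‖ * ‖g m‖ := norm_mul _ _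
      _ ≤ ‖z‖ * ∑ k ∈ Finset.range (m + 1), y ^ k * ‖z‖ ^ (m - k) :=
          mul_le_mul_of_nonneg_left h2 (norm_nonneg z)
  have hstrict : ‖z‖ * ∑ k ∈ Finset.range (m + 1), y ^ k * ‖z‖ ^ (m - k)
      < x * hcoef x y m := by
    have e1 : ‖z‖ * ∑ k ∈ Finset.range (m + 1), y ^ k * ‖z‖ ^ (m - k)
        = ∑ k ∈ Finset.range (m + 1), y ^ k * ‖z‖ ^ ((m - k) + 1) := by
      rw [Finset.mul_sum]
      apply Finset.sum_congr rfl
      intro k _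
      rw [pow_succ]; ring
    have e2 : x * hcoef x y m = ∑ k ∈ Finset.range (m + 1), y ^ k * x ^ ((m - k) + 1) := by
      have : hcoef x y m = ∑ k ∈ Finset.range (m + 1), y ^ k * x ^ (m - k) := by
        rw [hcoef, ← Finset.sum_range_reflect]
        apply Finset.sum_congr rfl
        intro k hk
        have hk' : k ≤ m := by
          have := Finset.mem_range.mp hk; omega
        have h1 : m + 1 - 1 - k = m - k := by omega
        have h2 : m - (m - k) = k := by omega
        rw [h1, h2]; ring
      rw [this, Finset.mul_sum]
      apply Finset.sum_congr rfl
      intro k _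
      rw [pow_succ]; ring
    rw [e1, e2]
    apply Finset.sum_lt_sum_of_nonempty (by simp)
    intro k _
    have : ‖z‖ ^ ((m - k) + 1) < x ^ ((m - k) + 1) :=
      pow_lt_pow_left₀ hz (norm_nonneg z) (Nat.succ_ne_zero _)
    exact mul_lt_mul_of_pos_left this (pow_pos hy k)
  linarith

/-- Uniqueness of power series coefficients: if `∑ d m * t^m = 0` near 0, all `d m = 0`. -/
lemma coeff_eq_zero {d : ℕ → ℂ} {ε : ℝ} (hε : 0 < ε)
    (h : ∀ t : ℂ, ‖t‖ < ε → HasSum (fun m => d m * t ^ m) 0) : ∀ m, d m = 0 := by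
  set p := FormalMultilinearSeries.ofScalars ℂ d with hp
  have hpn : ∀ n, ‖p n‖ = ‖d n‖ := by
    intro n
    rw [hp, FormalMultilinearSeries.ofScalars_norm]
  set r : NNReal := Real.toNNReal (ε / 2) with hrdef
  have hr : (r : ℝ) = ε / 2 := Real.coe_toNNReal _ (by linarith)
  have htν : ‖((ε / 2 : ℝ) : ℂ)‖ < ε := by
    rw [Complex.norm_real, Real.norm_eq_abs, abs_of_pos (by linarith)]; linarith
  have hsum : Summable fun n => ‖p n‖ * (r : ℝ) ^ n := by
    have hS := (h _ htν).summable
    have hS' : Summable fun n => ‖d n * ((ε / 2 : ℝ) : ℂ) ^ n‖ := hS.norm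
    apply hS'.congr
    intro n
    rw [norm_mul, norm_pow, Complex.norm_real, Real.norm_eq_abs,
      abs_of_pos (by linarith : (0:ℝ) < ε / 2), hpn, hr]
  have hrad : (r : ENNReal) ≤ p.radius := p.le_radius_of_summable_norm hsum
  have hball : HasFPowerSeriesOnBall (0 : ℂ → ℂ) p 0 r := by
    refine ⟨hrad, ?_, ?_⟩
    · exact_mod_cast Real.toNNReal_pos.mpr (by linarith : (0:ℝ) < ε / 2)
    · intro y hy
      have hy' : ‖y‖ < ε := by
        rw [mem_emetric_ball_zero_iff] at hy
        have := ENNReal.coe_lt_coe.mp hy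
        have h2 : ‖y‖ < (r : ℝ) := this
        linarith [hr ▸ h2]
      have hs := h y hy'
      simp only [Pi.zero_apply, zero_add]
      have hfun : (fun n : ℕ => (p n fun _ => y)) = fun m => d m * y ^ m := by
        funext n
        rw [hp, FormalMultilinearSeries.ofScalars_apply_eq, smul_eq_mul]
      rw [hfun]
      exact hs
  have hzero : p = 0 := hball.hasFPowerSeriesAt.eq_zero
  intro m
  have := congrFun ((FormalMultilinearSeries.ofScalars_series_eq_zero (𝕜 := ℂ) ℂ).mp hzero) m
  exact this

lemma prod_pow_aux (t u v : ℂ) (k : ℕ) :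
    ∑ i ∈ Finset.range (k + 1), (t * u) ^ i * (t * v) ^ (k - i)
      = t ^ k * ∑ i ∈ Finset.range (k + 1), u ^ i * v ^ (k - i) := by
  rw [Finset.mul_sum]
  apply Finset.sum_congr rfl
  intro i hi
  have hi' : i ≤ k := Finset.mem_range_succ_iff.mp hi
  have ht : t ^ k = t ^ i * t ^ (k - i) := by
    rw [← pow_add]; congr 1; omega
  rw [mul_pow, mul_pow, ht]; ring

/-- The generating function expansion with explicit coefficients. -/
lemma Qsum (x y cc bb aa : ℝ) (z : ℂ)
    (hb : cc * (x + y) = -bb) (ha : cc * (x * y) = aa) :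
    ∃ ε > 0, ∀ t : ℂ, ‖t‖ < ε →
      HasSum (fun m => ((cc : ℂ)⁻¹ *
          ∑ k ∈ Finset.range (m + 1), (hcoef x y k : ℂ) * z ^ (m - k)) * t ^ m)
        ((((aa : ℂ) * t ^ 2 + (bb : ℂ) * t + (cc : ℂ)) * (1 - t * z))⁻¹) := by
  set S : ℝ := 1 + |x| + |y| + ‖z‖ with hSdef
  have hS : 0 < S := by positivity
  refine ⟨S⁻¹, by positivity, fun t ht => ?_⟩
  have htS : ‖t‖ * S < 1 := by
    have := mul_lt_mul_of_pos_right ht hS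
    rwa [inv_mul_cancel₀ hS.ne'] at this
  have hbound : ∀ w : ℂ, ‖w‖ ≤ S - 1 → ‖t * w‖ < 1 := by
    intro w hw
    rw [norm_mul]
    calc ‖t‖ * ‖w‖ ≤ ‖t‖ * (S - 1) := mul_le_mul_of_nonneg_left hw (norm_nonneg t)
      _ ≤ ‖t‖ * S := by nlinarith [norm_nonneg t]
      _ < 1 := htS
  have htx : ‖t * (x : ℂ)‖ < 1 := by
    apply hbound
    rw [Complex.norm_real, Real.norm_eq_abs, hSdef]
    linarith [abs_nonneg y, norm_nonneg z]
  have hty : ‖t * (y : ℂ)‖ < 1 := by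
    apply hbound
    rw [Complex.norm_real, Real.norm_eq_abs, hSdef]
    linarith [abs_nonneg x, norm_nonneg z]
  have htz : ‖t * z‖ < 1 := by
    apply hbound
    rw [hSdef]
    linarith [abs_nonneg x, abs_nonneg y]
  have G1 : HasSum (fun n => (t * (x : ℂ)) ^ n) (1 - t * x)⁻¹ :=
    hasSum_geometric_of_norm_lt_one htx
  have G2 : HasSum (fun n => (t * (y : ℂ)) ^ n) (1 - t * y)⁻¹ :=
    hasSum_geometric_of_norm_lt_one hty
  have G3 : HasSum (fun n => (t * z) ^ n) (1 - t * z)⁻¹ :=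
    hasSum_geometric_of_norm_lt_one htz
  have N1 : Summable fun n => ‖(t * (x : ℂ)) ^ n‖ := by
    simp_rw [norm_pow]; exact summable_geometric_of_lt_one (norm_nonneg _) htx
  have N2 : Summable fun n => ‖(t * (y : ℂ)) ^ n‖ := by
    simp_rw [norm_pow]; exact summable_geometric_of_lt_one (norm_nonneg _) hty
  have N3 : Summable fun n => ‖(t * z) ^ n‖ := by
    simp_rw [norm_pow]; exact summable_geometric_of_lt_one (norm_nonneg _) htz
  set F : ℕ → ℂ := fun n => ∑ k ∈ Finset.range (n + 1), (t * (x : ℂ)) ^ k * (t * (y : ℂ)) ^ (n - k)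
    with hF
  have H12 : HasSum F ((1 - t * x)⁻¹ * (1 - t * y)⁻¹) := by
    have := hasSum_sum_range_mul_of_summable_norm N1 N2
    rwa [G1.tsum_eq, G2.tsum_eq] at this
  have NF : Summable fun n => ‖F n‖ := summable_norm_sum_mul_range_of_summable_norm N1 N2
  have H123 : HasSum (fun m => ∑ k ∈ Finset.range (m + 1), F k * (t * z) ^ (m - k))
      ((1 - t * x)⁻¹ * (1 - t * y)⁻¹ * (1 - t * z)⁻¹) := by
    have := hasSum_sum_range_mul_of_summable_norm NF N3
    rwa [H12.tsum_eq, G3.tsum_eq] at this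
  have Hfin := H123.mul_left ((cc : ℂ))⁻¹
  have hterm : ∀ m, (cc : ℂ)⁻¹ * ∑ k ∈ Finset.range (m + 1), F k * (t * z) ^ (m - k)
      = ((cc : ℂ)⁻¹ * ∑ k ∈ Finset.range (m + 1), (hcoef x y k : ℂ) * z ^ (m - k)) * t ^ m := by
    intro m
    have e : ∀ k ∈ Finset.range (m + 1),
        F k * (t * z) ^ (m - k) = ((hcoef x y k : ℂ) * z ^ (m - k)) * t ^ m := by
      intro k hk
      have hk' : k ≤ m := Finset.mem_range_succ_iff.mp hk
      have hFk : F k = t ^ k * (hcoef x y k : ℂ) := by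
        rw [hF]
        simp only
        rw [prod_pow_aux]
        congr 1
        push_cast [hcoef]
        rfl
      have htm : t ^ m = t ^ k * t ^ (m - k) := by
        rw [← pow_add]; congr 1; omega
      rw [hFk, mul_pow, htm]; ring
    rw [Finset.sum_congr rfl e, ← Finset.sum_mul]
    ring
  have hval : ((cc : ℂ))⁻¹ * ((1 - t * x)⁻¹ * (1 - t * y)⁻¹ * (1 - t * z)⁻¹)
      = (((aa : ℂ) * t ^ 2 + (bb : ℂ) * t + (cc : ℂ)) * (1 - t * z))⁻¹ := by
    have hb' : (cc : ℂ) * ((x : ℂ) + (y : ℂ)) = -(bb : ℂ) := by exact_mod_cast congrArg Complex.ofReal hb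
    have ha' : (cc : ℂ) * ((x : ℂ) * (y : ℂ)) = (aa : ℂ) := by exact_mod_cast congrArg Complex.ofReal ha
    have hfact : (aa : ℂ) * t ^ 2 + (bb : ℂ) * t + (cc : ℂ)
        = (cc : ℂ) * ((1 - t * x) * (1 - t * y)) := by
      linear_combination - t ^ 2 * ha' + t * hb'
    rw [hfact, mul_inv, mul_inv, mul_inv]
    ring
  rw [← hval]
  exact Hfin.congr_fun fun m => (hterm m).symm

lemma hcoef_smul (s u v : ℝ) (j : ℕ) :
    hcoef (s * u) (s * v) j = s ^ j * hcoef u v j := by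
  rw [hcoef, hcoef, Finset.mul_sum]
  apply Finset.sum_congr rfl
  intro i hi
  have hi' : i ≤ j := Finset.mem_range_succ_iff.mp hi
  have hs : s ^ j = s ^ i * s ^ (j - i) := by rw [← pow_add]; congr 1; omega
  rw [mul_pow, mul_pow, hs]; ring

/-- If `ac > 0`, `b² - 4ac > 0`, `{P_m}` is generated by `1/((at²+bt+c)(1-tz))`,
and `α` is the root of `at²+bt+c` of smallest modulus, then no zero of `P_m`
lies in the open ball of radius `1/|α|`. -/
theorem stmt_15 (a b c : ℝ) (hac : 0 < a * c) (hd : 0 < b ^ 2 - 4 * a * c)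
    (α : ℝ) (hα : a * α ^ 2 + b * α + c = 0)
    (hmin : ∀ β : ℝ, a * β ^ 2 + b * β + c = 0 → |α| ≤ |β|)
    (P : ℕ → ℂ → ℂ)
    (hP : ∀ z : ℂ, ∃ ε > 0, ∀ t : ℂ, ‖t‖ < ε →
      HasSum (fun m => P m z * t ^ m)
        ((((a : ℂ) * t ^ 2 + (b : ℂ) * t + (c : ℂ)) * (1 - t * z))⁻¹)) :
    ∀ m : ℕ, ∀ z : ℂ, P m z = 0 → 1 / |α| ≤ ‖z‖ := by
  intro m z hPmz
  by_contra hcon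
  push_neg at hcon
  -- basic nonvanishing facts
  have ha0 : a ≠ 0 := by rintro rfl; simp at hac
  have hc0 : c ≠ 0 := by rintro rfl; simp at hac
  have hα0 : α ≠ 0 := by rintro rfl; simp at hα; exact hc0 hα
  set β : ℝ := c / (a * α) with hβ
  have hβ0 : β ≠ 0 := div_ne_zero hc0 (mul_ne_zero ha0 hα0)
  have hβroot : a * β ^ 2 + b * β + c = 0 := by
    rw [hβ]
    field_simp
    linear_combination c * hα
  set x : ℝ := α⁻¹ with hx
  set y : ℝ := β⁻¹ with hy
  have hx0 : x ≠ 0 := inv_ne_zero hα0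
  have hy0 : y ≠ 0 := inv_ne_zero hβ0
  have hxyprod : c * (x * y) = a := by
    rw [hx, hy, hβ]
    field_simp
  have hxysum : c * (x + y) = -b := by
    rw [hx, hy, hβ]
    field_simp
    linear_combination hα
  have hxypos : 0 < x * y := by
    have h1 : x * y = a * c / c ^ 2 := by
      field_simp
      linear_combination hxyprod
    rw [h1]
    positivity
  have hyx : |y| ≤ |x| := by
    rw [hx, hy, abs_inv, abs_inv]
    exact inv_anti₀ (abs_pos.mpr hα0) (hmin β hβroot)
  -- sign normalization
  obtain ⟨s, hs1, hsx, hsy⟩ : ∃ s : ℝ, s * s = 1 ∧ s * x = |x| ∧ s * y = |y| := by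
    rcases lt_trichotomy 0 x with h | h | h
    · have hypos : 0 < y := by nlinarith
      exact ⟨1, by ring, by rw [one_mul, abs_of_pos h], by rw [one_mul, abs_of_pos hypos]⟩
    · exact absurd h.symm hx0
    · have hyneg : y < 0 := by nlinarith
      exact ⟨-1, by ring, by rw [neg_one_mul, abs_of_neg h], by rw [neg_one_mul, abs_of_neg hyneg]⟩
  have hxeq : x = s * |x| := by rw [← hsx, ← mul_assoc, hs1, one_mul]
  have hyeq : y = s * |y| := by rw [← hsy, ← mul_assoc, hs1, one_mul]
  have hxpos : 0 < |x| := abs_pos.mpr hx0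
  have hypos : 0 < |y| := abs_pos.mpr hy0
  have habs_s : |s| = 1 := by
    have h1 : |s| * |s| = 1 := by rw [abs_mul_abs_self, hs1]
    nlinarith [abs_nonneg s]
  -- the norm bound
  have hzx : ‖z‖ < |x| := by
    rw [hx, abs_inv]
    rw [one_div] at hcon
    exact hcon
  -- the explicit coefficients
  obtain ⟨ε₂, hε₂, hQ⟩ := Qsum x y c b a z hxysum hxyprod
  obtain ⟨ε₁, hε₁, hPz⟩ := hP z
  set Q : ℕ → ℂ := fun m => (c : ℂ)⁻¹ *
      ∑ k ∈ Finset.range (m + 1), (hcoef x y k : ℂ) * z ^ (m - k) with hQdef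
  have hPQ : ∀ n, P n z = Q n := by
    have hzero : ∀ n, P n z - Q n = 0 := by
      apply coeff_eq_zero (lt_min hε₁ hε₂)
      intro t ht
      have h1 := hPz t (lt_of_lt_of_le ht (min_le_left _ _))
      have h2 := hQ t (lt_of_lt_of_le ht (min_le_right _ _))
      have := h1.sub h2
      simp only [sub_self] at this
      apply this.congr_fun
      intro n
      ring
    intro n
    have := hzero n
    linear_combination this
  -- nonvanishing of the explicit coefficient
  have hQm : Q m ≠ 0 := by
    rw [hQdef]
    simp only
    have hsum_eq : ∑ k ∈ Finset.range (m + 1), (hcoef x y k : ℂ) * z ^ (m - k)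
        = (s : ℂ) ^ m * ∑ k ∈ Finset.range (m + 1),
            (hcoef |x| |y| k : ℂ) * ((s : ℂ) * z) ^ (m - k) := by
      rw [Finset.mul_sum]
      apply Finset.sum_congr rfl
      intro k hk
      have hk' : k ≤ m := Finset.mem_range_succ_iff.mp hk
      have hcast : (hcoef x y k : ℂ) = (s : ℂ) ^ k * (hcoef |x| |y| k : ℂ) := by
        have h := hcoef_smul s |x| |y| k
        rw [← hxeq, ← hyeq] at h
        rw [h]
        push_cast
        ring
      have e1 : ((s : ℂ)) ^ (m - k) * ((s : ℂ)) ^ k = ((s : ℂ)) ^ m := by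
        rw [← pow_add]; congr 1; omega
      have hsc : (s : ℂ) * (s : ℂ) = 1 := by exact_mod_cast congrArg Complex.ofReal hs1
      have e2 : ((s : ℂ)) ^ (m - k) * ((s : ℂ)) ^ (m - k) = 1 := by
        rw [← mul_pow, hsc, one_pow]
      rw [hcast]
      linear_combination ((s : ℂ) ^ (m - k) * (hcoef |x| |y| k : ℂ) * z ^ (m - k)) * e1 -
        ((s : ℂ) ^ k * (hcoef |x| |y| k : ℂ) * z ^ (m - k)) * e2
    rw [hsum_eq]
    have hzs : ‖(s : ℂ) * z‖ < |x| := by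
      rw [norm_mul, Complex.norm_real, Real.norm_eq_abs, habs_s, one_mul]
      exact hzx
    have hEK := EK hypos hyx m hzs
    have hs0 : (s : ℂ) ≠ 0 := by
      intro h
      rw [Complex.ofReal_eq_zero] at h
      rw [h] at habs_s
      simp at habs_s
    exact mul_ne_zero (inv_ne_zero (by exact_mod_cast hc0))
      (mul_ne_zero (pow_ne_zero m hs0) hEK)
  exact hQm (hPQ m ▸ hPmz)
end

section
/- Let a, b, c ∈ ℝ\{0} with ac > 0 and b² − 4ac > 0, and let {P_m(z)} be generated by 1/((at²+bt+c)(1−tz)). Then for every m ≥ 0, no zero of P_m(z) lies in the closed disk {z : |z| ≤ 1/|α|}, where α is the root of at²+bt+c of smaller modulus. -/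
open Finset
open scoped ENNReal NNReal

/-- `S16 u v k = ∑_{i≤k} u^i v^(k-i)` : coefficients of `1/((1-ut)(1-vt))`. -/
def S16 (u v : ℝ) (k : ℕ) : ℝ := ∑ i ∈ range (k+1), u^i * v^(k-i)

/-- `T16 u v z m = ∑_{k≤m} S16 k · z^(m-k)` : the polynomial values. -/
noncomputable def T16 (u v : ℝ) (z : ℂ) (m : ℕ) : ℂ :=
  ∑ k ∈ range (m+1), (S16 u v k : ℂ) * z^(m-k)

/-- auxiliary: `G16 v z m = ∑_{l≤m} v^(m-l) z^l`. -/
noncomputable def G16 (v : ℝ) (z : ℂ) (m : ℕ) : ℂ :=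
  ∑ l ∈ range (m+1), (v:ℂ)^(m-l) * z^l

lemma S16_zero (u v : ℝ) : S16 u v 0 = 1 := by simp [S16]

lemma S16_pos {u v : ℝ} (hu : 0 < u) (hv : 0 < v) (k : ℕ) : 0 < S16 u v k := by
  apply Finset.sum_pos
  · intro i _; positivity
  · exact nonempty_range_add_one

lemma S16_succ (u v : ℝ) (k : ℕ) : S16 u v (k+1) = u * S16 u v k + v^(k+1) := by
  rw [S16, Finset.sum_range_succ', S16, Finset.mul_sum]
  congr 1
  · apply Finset.sum_congr rfl
    intro i _
    rw [Nat.succ_sub_succ]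
    ring
  · simp

lemma T16_succ (u v : ℝ) (z : ℂ) (m : ℕ) :
    T16 u v z (m+1) = z * T16 u v z m + (S16 u v (m+1) : ℂ) := by
  rw [T16, Finset.sum_range_succ, T16, Finset.mul_sum]
  congr 1
  · apply Finset.sum_congr rfl
    intro k hk
    rw [mem_range] at hk
    have : m + 1 - k = (m - k) + 1 := by omega
    rw [this, pow_succ]
    ring
  · simp

lemma G16_succ (v : ℝ) (z : ℂ) (m : ℕ) :
    G16 v z (m+1) = z * G16 v z m + (v:ℂ)^(m+1) := by
  rw [G16, Finset.sum_range_succ', G16, Finset.mul_sum]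
  simp only [Nat.succ_sub_succ, Nat.sub_zero, pow_zero, mul_one]
  congr 1
  apply Finset.sum_congr rfl
  intro l _
  ring

lemma key_ident (u v : ℝ) (z : ℂ) (m : ℕ) :
    (z - (u:ℂ)) * T16 u v z m = G16 v z (m+1) - (S16 u v (m+1) : ℂ) := by
  induction m with
  | zero =>
      simp only [T16, G16, S16_zero]
      rw [show (1:ℕ)+1 = 2 from rfl]
      simp [Finset.sum_range_succ, S16_succ, S16_zero]
      push_cast
      ring
  | succ m ih =>
      rw [T16_succ, G16_succ, S16_succ u v (m+1)]
      push_cast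
      push_cast at ih
      linear_combination z * ih

/-- `S16` written with roles swapped. -/
lemma S16_alt (u v : ℝ) (k : ℕ) : S16 u v k = ∑ l ∈ range (k+1), v^(k-l) * u^l := by
  rw [S16]
  apply Finset.sum_congr rfl
  intro i _
  ring

lemma T16_ne_zero {u v : ℝ} (hu : 0 < u) (hv : 0 < v) (z : ℂ) (hz : ‖z‖ ≤ u) (m : ℕ) :
    T16 u v z m ≠ 0 := by
  intro h0
  have hG : G16 v z (m+1) = (S16 u v (m+1) : ℂ) := by
    have h := key_ident u v z m
    rw [h0, mul_zero] at h
    linear_combination -h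
  -- take real parts
  have hre : ∑ l ∈ range (m+2), v^(m+1-l) * ((z^l).re) = ∑ l ∈ range (m+2), v^(m+1-l) * u^l := by
    have h1 := congrArg Complex.re hG
    rw [G16, Complex.re_sum, S16_alt] at h1
    rw [Complex.ofReal_re] at h1
    convert h1 using 2 with l hl
    · rw [← Complex.ofReal_pow, Complex.re_ofReal_mul]
  -- each term of the difference vanishes
  have hterm : ∀ l ∈ range (m+2), v^(m+1-l) * (u^l - (z^l).re) = 0 := by
    rw [← Finset.sum_eq_zero_iff_of_nonneg]
    · rw [Finset.sum_congr rfl (fun l _ => mul_sub (v^(m+1-l)) (u^l) ((z^l).re)),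
        Finset.sum_sub_distrib, sub_eq_zero]
      linarith [hre]
    · intro l _
      have h2 : (z^l).re ≤ u^l := by
        calc (z^l).re ≤ ‖z^l‖ := Complex.re_le_norm _
        _ = ‖z‖^l := norm_pow z l
        _ ≤ u^l := pow_le_pow_left₀ (norm_nonneg z) hz l
      have h3 : (0:ℝ) ≤ v^(m+1-l) := by positivity
      nlinarith
  -- l = 1 gives Re z = u
  have h1 : z.re = u := by
    have := hterm 1 (by simp)
    have hv' : (0:ℝ) < v^(m+1-1) := by positivity
    simp only [pow_one] at this
    rcases mul_eq_zero.1 this with h | h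
    · exact absurd h (ne_of_gt hv')
    · linarith [sub_eq_zero.1 h]
  -- hence z = u
  have hzu : z = (u:ℂ) := by
    have hn2 : z.re^2 + z.im^2 = ‖z‖^2 := by
      rw [Complex.sq_norm, Complex.normSq_apply]
      ring
    have him : z.im = 0 := by nlinarith [norm_nonneg z]
    apply Complex.ext <;> simp [h1, him]
  -- but T16 at real u is positive
  rw [hzu] at h0
  have : T16 u v (u:ℂ) m = ((∑ k ∈ range (m+1), S16 u v k * u^(m-k) : ℝ) : ℂ) := by
    rw [T16]
    push_cast
    rfl
  rw [this] at h0
  rw [Complex.ofReal_eq_zero] at h0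
  have hpos : 0 < ∑ k ∈ range (m+1), S16 u v k * u^(m-k) := by
    apply Finset.sum_pos
    · intro k _
      have := S16_pos hu hv k
      positivity
    · exact nonempty_range_add_one
  linarith

lemma S16_neg (u v : ℝ) (k : ℕ) : S16 (-u) (-v) k = (-1)^k * S16 u v k := by
  rw [S16, S16, Finset.mul_sum]
  apply Finset.sum_congr rfl
  intro i hi
  rw [mem_range] at hi
  have hik : i + (k - i) = k := by omega
  rw [neg_pow u i, neg_pow v (k-i)]
  calc (-1)^i * u^i * ((-1)^(k-i) * v^(k-i)) = ((-1)^i * (-1)^(k-i)) * (u^i * v^(k-i)) := by ring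
  _ = (-1)^k * (u^i * v^(k-i)) := by rw [← pow_add, hik]

lemma T16_neg (u v : ℝ) (z : ℂ) (m : ℕ) :
    T16 (-u) (-v) (-z) m = (-1)^m * T16 u v z m := by
  rw [T16, T16, Finset.mul_sum]
  apply Finset.sum_congr rfl
  intro k hk
  rw [mem_range] at hk
  have hkm : k + (m - k) = m := by omega
  rw [S16_neg, neg_pow z (m-k)]
  push_cast
  calc ((-1:ℂ))^k * (S16 u v k : ℂ) * ((-1)^(m-k) * z^(m-k))
      = ((-1:ℂ))^k * (-1)^(m-k) * ((S16 u v k : ℂ) * z^(m-k)) := by ring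
  _ = (-1)^m * ((S16 u v k : ℂ) * z^(m-k)) := by rw [← pow_add, hkm]

lemma hasSum_T16 (u v : ℝ) (z t : ℂ) (hu : ‖(u:ℂ)*t‖ < 1) (hv : ‖(v:ℂ)*t‖ < 1)
    (hz : ‖z*t‖ < 1) :
    HasSum (fun m => T16 u v z m * t^m)
      ((1 - (u:ℂ)*t)⁻¹ * (1 - (v:ℂ)*t)⁻¹ * (1 - z*t)⁻¹) := by
  set A : ℕ → ℂ := fun m => ((u:ℂ)*t)^m with hA
  set B : ℕ → ℂ := fun m => ((v:ℂ)*t)^m with hB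
  set C : ℕ → ℂ := fun m => (z*t)^m with hC
  have hAn : Summable (fun m => ‖A m‖) := by
    simpa [hA, norm_pow] using summable_geometric_of_lt_one (norm_nonneg _) hu
  have hBn : Summable (fun m => ‖B m‖) := by
    simpa [hB, norm_pow] using summable_geometric_of_lt_one (norm_nonneg _) hv
  have hCn : Summable (fun m => ‖C m‖) := by
    simpa [hC, norm_pow] using summable_geometric_of_lt_one (norm_nonneg _) hz
  set D : ℕ → ℂ := fun n => ∑ k ∈ range (n+1), A k * B (n-k) with hD
  have hDsum : HasSum D ((∑' n, A n) * (∑' n, B n)) :=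
    hasSum_sum_range_mul_of_summable_norm hAn hBn
  have hDn : Summable (fun n => ‖D n‖) := summable_norm_sum_mul_range_of_summable_norm hAn hBn
  have hEsum : HasSum (fun m => ∑ k ∈ range (m+1), D k * C (m-k))
      ((∑' n, D n) * (∑' n, C n)) := hasSum_sum_range_mul_of_summable_norm hDn hCn
  have hval : (∑' n, D n) * (∑' n, C n)
      = (1 - (u:ℂ)*t)⁻¹ * (1 - (v:ℂ)*t)⁻¹ * (1 - z*t)⁻¹ := by
    rw [hDsum.tsum_eq, tsum_geometric_of_norm_lt_one hu, tsum_geometric_of_norm_lt_one hv,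
      tsum_geometric_of_norm_lt_one hz]
  rw [hval] at hEsum
  convert hEsum using 2 with m
  rw [T16, Finset.sum_mul]
  apply Finset.sum_congr rfl
  intro k hk
  rw [mem_range] at hk
  have hkm : k + (m - k) = m := by omega
  rw [hD]
  simp only [S16, hA, hB, hC]
  push_cast
  rw [Finset.sum_mul, Finset.sum_mul, Finset.sum_mul]
  apply Finset.sum_congr rfl
  intro i hi
  rw [mem_range] at hi
  have hik : i + (k - i) = k := by omega
  rw [mul_pow, mul_pow, mul_pow]
  calc (u:ℂ)^i * v^(k-i) * z^(m-k) * t^m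
      = u^i * v^(k-i) * z^(m-k) * (t^i * t^(k-i) * t^(m-k)) := by
        rw [← pow_add, ← pow_add, hik, hkm]
  _ = (u:ℂ)^i * t^i * ((v:ℂ)^(k-i) * t^(k-i)) * (z^(m-k) * t^(m-k)) := by ring

lemma hasFPowerSeriesAt_of_hasSum16 {f : ℂ → ℂ} {co : ℕ → ℂ} {ε : ℝ} (hε : 0 < ε)
    (h : ∀ t : ℂ, ‖t‖ < ε → HasSum (fun m => co m * t ^ m) (f t)) :
    HasFPowerSeriesAt f (FormalMultilinearSeries.ofScalars ℂ co) 0 := by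
  set p := FormalMultilinearSeries.ofScalars ℂ co with hp
  set r : NNReal := ⟨ε/2, by linarith⟩ with hrdef
  have hr2 : (r:ℝ) = ε/2 := rfl
  have hrpos : 0 < (r:ℝ) := by rw [hr2]; linarith
  have hcast : ‖((ε/2 : ℝ) : ℂ)‖ = ε/2 := by
    rw [Complex.norm_real, Real.norm_eq_abs, abs_of_pos (by linarith)]
  have hradius : (r : ℝ≥0∞) ≤ p.radius := by
    apply FormalMultilinearSeries.le_radius_of_tendsto p (l := (0:ℝ))
    have hs := (h ((ε/2 : ℝ) : ℂ) (by rw [hcast]; linarith)).summable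
    have h0 := hs.tendsto_atTop_zero.norm
    rw [norm_zero] at h0
    convert h0 using 2 with n
    rw [norm_mul, norm_pow, hcast, FormalMultilinearSeries.ofScalars_norm, hr2]
  refine ⟨r, ?_⟩
  refine ⟨hradius, by exact_mod_cast hrpos, ?_⟩
  intro y hy
  rw [mem_emetric_ball_zero_iff] at hy
  have hy' : ‖y‖ < (r:ℝ) := by exact_mod_cast hy
  have := h y (by linarith [hr2 ▸ hy'])
  rw [zero_add]
  convert this using 2 with n
  · rfl
  rw [hp, FormalMultilinearSeries.ofScalars_apply_eq, smul_eq_mul]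

/-- If `a, b, c ≠ 0`, `ac > 0`, `b² - 4ac > 0`, `{P_m}` is generated by
`1/((at²+bt+c)(1-tz))`, and `α` is the root of `at²+bt+c` of smaller modulus,
then no zero of `P_m` lies in the closed disk of radius `1/|α|`. -/
theorem stmt_16 (a b c : ℝ) (ha : a ≠ 0) (hb : b ≠ 0) (hc : c ≠ 0)
    (hac : 0 < a * c) (hd : 0 < b ^ 2 - 4 * a * c)
    (α : ℝ) (hα : a * α ^ 2 + b * α + c = 0)
    (hmin : ∀ β : ℝ, a * β ^ 2 + b * β + c = 0 → |α| ≤ |β|)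
    (P : ℕ → ℂ → ℂ)
    (hP : ∀ z : ℂ, ∃ ε > 0, ∀ t : ℂ, ‖t‖ < ε →
      HasSum (fun m => P m z * t ^ m)
        ((((a : ℂ) * t ^ 2 + (b : ℂ) * t + (c : ℂ)) * (1 - t * z))⁻¹)) :
    ∀ m : ℕ, ∀ z : ℂ, P m z = 0 → 1 / |α| < ‖z‖ := by
  intro m z hPz
  by_contra hle
  push_neg at hle
  have hα0 : α ≠ 0 := by
    intro h
    rw [h] at hα
    simp at hα
    exact hc hα
  set β := c / (a * α) with hβdef
  have hβ0 : β ≠ 0 := div_ne_zero hc (mul_ne_zero ha hα0)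
  set u := α⁻¹ with hudef
  set v := β⁻¹ with hvdef
  have hu0 : u ≠ 0 := inv_ne_zero hα0
  have huv : 0 < u * v := by
    have h1 : u * v = a / c := by
      rw [hudef, hvdef, hβdef]
      field_simp
    rw [h1]
    rcases mul_pos_iff.1 hac with ⟨ha', hc'⟩ | ⟨ha', hc'⟩
    · exact div_pos ha' hc'
    · exact div_pos_of_neg_of_neg ha' hc'
  -- complex facts
  have hαC0 : (α:ℂ) ≠ 0 := Complex.ofReal_ne_zero.2 hα0
  have haC0 : (a:ℂ) ≠ 0 := Complex.ofReal_ne_zero.2 ha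
  have hcC0 : (c:ℂ) ≠ 0 := Complex.ofReal_ne_zero.2 hc
  have e1 : (a:ℂ) * (α:ℂ)^2 + (b:ℂ) * (α:ℂ) + (c:ℂ) = 0 := by
    have := congrArg (fun x : ℝ => (x:ℂ)) hα
    push_cast at this
    simpa using this
  have huC : ((u:ℝ):ℂ) = ((α:ℂ))⁻¹ := by rw [hudef]; push_cast; ring
  have hvC : ((v:ℝ):ℂ) = (a:ℂ) * (α:ℂ) / (c:ℂ) := by
    rw [hvdef, hβdef]
    push_cast
    field_simp
  have hfac : ∀ t : ℂ, (a:ℂ) * t^2 + (b:ℂ) * t + (c:ℂ)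
      = (c:ℂ) * ((1 - (u:ℂ) * t) * (1 - (v:ℂ) * t)) := by
    intro t
    rw [huC, hvC]
    field_simp
    ring_nf
    linear_combination t * e1
  obtain ⟨ε₁, hε₁, hPsum⟩ := hP z
  -- second power series representation
  set S : ℝ := 1 + |u| + |v| + ‖z‖ with hSdef
  have hSpos : 0 < S := by positivity
  have hQsum : ∀ t : ℂ, ‖t‖ < S⁻¹ →
      HasSum (fun k => ((c:ℂ)⁻¹ * T16 u v z k) * t ^ k)
        ((((a:ℂ) * t^2 + (b:ℂ) * t + (c:ℂ)) * (1 - t * z))⁻¹) := by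
    intro t ht
    have htS : ‖t‖ * S < 1 := by
      have h5 := mul_lt_mul_of_pos_right ht hSpos
      rwa [inv_mul_cancel₀ (ne_of_gt hSpos)] at h5
    have hut : ‖((u:ℝ):ℂ) * t‖ < 1 := by
      rw [norm_mul, Complex.norm_real, Real.norm_eq_abs]
      nlinarith [norm_nonneg t, abs_nonneg u, abs_nonneg v, norm_nonneg z]
    have hvt : ‖((v:ℝ):ℂ) * t‖ < 1 := by
      rw [norm_mul, Complex.norm_real, Real.norm_eq_abs]
      nlinarith [norm_nonneg t, abs_nonneg u, abs_nonneg v, norm_nonneg z]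
    have hzt : ‖z * t‖ < 1 := by
      rw [norm_mul]
      nlinarith [norm_nonneg t, abs_nonneg u, abs_nonneg v, norm_nonneg z]
    have h1 := (hasSum_T16 u v z t hut hvt hzt).mul_left ((c:ℂ)⁻¹)
    have h2 : (fun k => ((c:ℂ)⁻¹ * T16 u v z k) * t ^ k)
        = fun k => (c:ℂ)⁻¹ * (T16 u v z k * t ^ k) := by
      funext k; ring
    rw [h2]
    convert h1 using 1
    · rfl
    rw [hfac t]
    rw [mul_inv, mul_inv, mul_inv]
    have : (1 : ℂ) - t * z = 1 - z * t := by ring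
    rw [this]
    ring
  have hp1 := hasFPowerSeriesAt_of_hasSum16 hε₁ hPsum
  have hp2 := hasFPowerSeriesAt_of_hasSum16 (by positivity : (0:ℝ) < S⁻¹) hQsum
  have heq := hp1.eq_formalMultilinearSeries hp2
  have hco : (fun k => P k z) = fun k => (c:ℂ)⁻¹ * T16 u v z k :=
    FormalMultilinearSeries.ofScalars_series_injective ℂ ℂ heq
  have hT0 : T16 u v z m = 0 := by
    have h3 := congrFun hco m
    rw [hPz] at h3
    have h4 := h3.symm
    rcases mul_eq_zero.1 h4 with h | h
    · exact absurd h (inv_ne_zero hcC0)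
    · exact h
  have habs : 1 / |α| = |u| := by rw [hudef, abs_inv, one_div]
  rw [habs] at hle
  rcases mul_pos_iff.1 huv with ⟨hu', hv'⟩ | ⟨hu', hv'⟩
  · exact T16_ne_zero hu' hv' z (by rwa [abs_of_pos hu'] at hle) m hT0
  · have h2 : T16 (-u) (-v) (-z) m = 0 := by rw [T16_neg, hT0, mul_zero]
    refine T16_ne_zero (by linarith : (0:ℝ) < -u) (by linarith : (0:ℝ) < -v) (-z) ?_ m h2
    rw [norm_neg]
    rwa [abs_of_neg hu'] at hle
end

section
/- Eneström–Kakeya: if p(z) = Σ_{k=0}^{m} a_k z^k has real positive coefficients, then all zeros of p lie in the annulus r ≤ |z| ≤ R, where r = min_{0≤k≤m−1} a_k/a_{k+1} and R = max_{0≤k≤m−1} a_k/a_{k+1}. -/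
/-- Key lemma: monotone positive coefficients ⇒ roots in closed unit disk. -/
lemma EK_aux (m : ℕ) (b : ℕ → ℝ) (hb : ∀ k ≤ m, 0 < b k)
    (hmono : ∀ k < m, b k ≤ b (k + 1)) (z : ℂ)
    (hz : ∑ k ∈ Finset.range (m + 1), (b k : ℂ) * z ^ k = 0) : ‖z‖ ≤ 1 := by
  by_contra h
  push_neg at h
  have key : (b m : ℂ) * z ^ (m + 1)
      = (b 0 : ℂ) + ∑ k ∈ Finset.range m, ((b (k + 1) : ℂ) - b k) * z ^ (k + 1) := by
    have h1 : z * ∑ k ∈ Finset.range (m + 1), (b k : ℂ) * z ^ k = 0 := by rw [hz]; ring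
    have h2 : ∑ k ∈ Finset.range (m + 1), (b k : ℂ) * z ^ (k + 1) = 0 := by
      rw [← h1, Finset.mul_sum]; apply Finset.sum_congr rfl; intro k _; ring
    rw [Finset.sum_range_succ] at h2
    rw [Finset.sum_range_succ'] at hz
    have hsub : ∑ k ∈ Finset.range m, ((b (k + 1) : ℂ) - b k) * z ^ (k + 1)
        = (∑ k ∈ Finset.range m, (b (k + 1) : ℂ) * z ^ (k + 1))
          - ∑ k ∈ Finset.range m, (b k : ℂ) * z ^ (k + 1) := by
      rw [← Finset.sum_sub_distrib]
      exact Finset.sum_congr rfl fun k _ => by ring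
    rw [hsub]
    linear_combination h2 - hz
  have hnorm : b m * ‖z‖ ^ (m + 1)
      ≤ b 0 + ∑ k ∈ Finset.range m, (b (k + 1) - b k) * ‖z‖ ^ (k + 1) := by
    calc b m * ‖z‖ ^ (m + 1) = ‖(b m : ℂ) * z ^ (m + 1)‖ := by
          rw [norm_mul, norm_pow, Complex.norm_real, Real.norm_of_nonneg (hb m le_rfl).le]
      _ = ‖(b 0 : ℂ) + ∑ k ∈ Finset.range m, ((b (k + 1) : ℂ) - b k) * z ^ (k + 1)‖ := by
          rw [key]
      _ ≤ ‖(b 0 : ℂ)‖ + ‖∑ k ∈ Finset.range m, ((b (k + 1) : ℂ) - b k) * z ^ (k + 1)‖ :=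
          norm_add_le _ _
      _ ≤ b 0 + ∑ k ∈ Finset.range m, (b (k + 1) - b k) * ‖z‖ ^ (k + 1) := by
          apply add_le_add
          · rw [Complex.norm_real, Real.norm_of_nonneg (hb 0 (Nat.zero_le m)).le]
          · refine (norm_sum_le _ _).trans ?_
            apply Finset.sum_le_sum
            intro k hk
            rw [norm_mul, norm_pow]
            have he : ‖((b (k + 1) : ℂ) - b k)‖ = b (k + 1) - b k := by
              rw [← Complex.ofReal_sub, Complex.norm_real,
                Real.norm_of_nonneg (sub_nonneg.mpr (hmono k (Finset.mem_range.mp hk)))]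
            rw [he]
  have hz1 : (1 : ℝ) ≤ ‖z‖ := le_of_lt h
  have hnorm2 : b 0 + ∑ k ∈ Finset.range m, (b (k + 1) - b k) * ‖z‖ ^ (k + 1)
      ≤ (b 0 + ∑ k ∈ Finset.range m, (b (k + 1) - b k)) * ‖z‖ ^ m := by
    rw [add_mul, Finset.sum_mul]
    apply add_le_add
    · have h1m : (1:ℝ) ≤ ‖z‖ ^ m := one_le_pow₀ hz1
      nlinarith [hb 0 (Nat.zero_le m)]
    · apply Finset.sum_le_sum
      intro k hk
      have hk' := Finset.mem_range.mp hk
      have h1 : (0:ℝ) ≤ b (k + 1) - b k := sub_nonneg.mpr (hmono k hk')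
      have h2 : ‖z‖ ^ (k + 1) ≤ ‖z‖ ^ m := pow_le_pow_right₀ hz1 hk'
      exact mul_le_mul_of_nonneg_left h2 h1
  have htel : b 0 + ∑ k ∈ Finset.range m, (b (k + 1) - b k) = b m := by
    rw [Finset.sum_range_sub]; ring
  rw [htel] at hnorm2
  have hfinal : b m * ‖z‖ ^ (m + 1) ≤ b m * ‖z‖ ^ m := hnorm.trans hnorm2
  have hbm := hb m le_rfl
  have h3 : ‖z‖ ^ (m + 1) ≤ ‖z‖ ^ m := le_of_mul_le_mul_left hfinal hbm
  have h4 : ‖z‖ ^ m < ‖z‖ ^ (m + 1) := pow_lt_pow_right₀ h (Nat.lt_succ_self m)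
  linarith

lemma EK_upper (m : ℕ) (hm : 1 ≤ m) (a : ℕ → ℝ) (ha : ∀ k ≤ m, 0 < a k)
    (hne : (Finset.range m).Nonempty) (z : ℂ)
    (hz : ∑ k ∈ Finset.range (m + 1), (a k : ℂ) * z ^ k = 0) :
    ‖z‖ ≤ (Finset.range m).sup' hne (fun k => a k / a (k + 1)) := by
  set R := (Finset.range m).sup' hne (fun k => a k / a (k + 1)) with hRdef
  have hR : 0 < R := by
    obtain ⟨k, hk⟩ := hne
    have hk' := Finset.mem_range.mp hk
    have h1 : a k / a (k + 1) ≤ R := Finset.le_sup' (fun k => a k / a (k + 1)) hk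
    have h2 := div_pos (ha k hk'.le) (ha (k + 1) hk')
    linarith
  have hR0 : (R : ℂ) ≠ 0 := by exact_mod_cast hR.ne'
  have hb : ∀ k ≤ m, 0 < a k * R ^ k := fun k hk =>
    mul_pos (ha k hk) (pow_pos hR k)
  have hmono : ∀ k < m, a k * R ^ k ≤ a (k + 1) * R ^ (k + 1) := by
    intro k hk
    have h1 : a k / a (k + 1) ≤ R :=
      Finset.le_sup' (fun k => a k / a (k + 1)) (Finset.mem_range.mpr hk)
    have h2 := ha (k + 1) hk
    have h3 : a k ≤ R * a (k + 1) := by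
      rw [div_le_iff₀ h2] at h1; linarith
    have h4 : (0:ℝ) ≤ R ^ k := (pow_pos hR k).le
    calc a k * R ^ k ≤ (R * a (k + 1)) * R ^ k := by nlinarith
      _ = a (k + 1) * R ^ (k + 1) := by ring
  have hsum : ∑ k ∈ Finset.range (m + 1), ((a k * R ^ k : ℝ) : ℂ) * (z / R) ^ k = 0 := by
    rw [← hz]
    apply Finset.sum_congr rfl
    intro k _
    push_cast
    field_simp
    rw [div_pow, mul_assoc, mul_div_assoc', mul_div_cancel_left₀ _ (pow_ne_zero k hR0)]
  have := EK_aux m (fun k => a k * R ^ k) hb hmono (z / R) hsum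
  rw [norm_div, Complex.norm_real, Real.norm_of_nonneg hR.le, div_le_one hR] at this
  exact this

/-- Eneström–Kakeya: if `p(z) = Σ_{k=0}^m a_k z^k` has real strictly positive
coefficients (and degree `m ≥ 1`), then every zero of `p` satisfies
`min_k a_k/a_{k+1} ≤ |z| ≤ max_k a_k/a_{k+1}`. -/
theorem stmt_17 (m : ℕ) (hm : 1 ≤ m) (a : ℕ → ℝ) (ha : ∀ k ≤ m, 0 < a k)
    (hne : (Finset.range m).Nonempty)
    (z : ℂ) (hz : ∑ k ∈ Finset.range (m + 1), (a k : ℂ) * z ^ k = 0) :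
    (Finset.range m).inf' hne (fun k => a k / a (k + 1)) ≤ ‖z‖ ∧
    ‖z‖ ≤ (Finset.range m).sup' hne (fun k => a k / a (k + 1)) := by
  constructor
  · -- lower bound
    set r := (Finset.range m).inf' hne (fun k => a k / a (k + 1)) with hrdef
    have hr : 0 < r := by
      apply (Finset.lt_inf'_iff hne).mpr
      intro k hk
      have hk' := Finset.mem_range.mp hk
      exact div_pos (ha k hk'.le) (ha (k + 1) hk')
    have hz0 : z ≠ 0 := by
      intro h0
      rw [h0] at hz
      have : ∑ k ∈ Finset.range (m + 1), (a k : ℂ) * 0 ^ k = (a 0 : ℂ) := by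
        rw [Finset.sum_range_succ']
        simp
      rw [this] at hz
      exact (ha 0 (Nat.zero_le m)).ne' (by exact_mod_cast hz)
    set c : ℕ → ℝ := fun k => a (m - k) with hcdef
    have hc : ∀ k ≤ m, 0 < c k := fun k hk => ha (m - k) (Nat.sub_le m k)
    have hcsum : ∑ k ∈ Finset.range (m + 1), (c k : ℂ) * (z⁻¹) ^ k = 0 := by
      have hrefl : ∑ k ∈ Finset.range (m + 1), (c k : ℂ) * z ^ (m - k)
          = ∑ k ∈ Finset.range (m + 1), (a k : ℂ) * z ^ k := by
        rw [← Finset.sum_range_reflect (fun k => (a k : ℂ) * z ^ k) (m + 1)]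
        apply Finset.sum_congr rfl
        intro k hk
        simp only [hcdef, Nat.add_sub_cancel]
      have hmain : ∑ k ∈ Finset.range (m + 1), (c k : ℂ) * (z⁻¹) ^ k
          = z⁻¹ ^ m * ∑ k ∈ Finset.range (m + 1), (c k : ℂ) * z ^ (m - k) := by
        rw [Finset.mul_sum]
        apply Finset.sum_congr rfl
        intro k hk
        have hk' : k ≤ m := Nat.lt_succ_iff.mp (Finset.mem_range.mp hk)
        have hzm : z ^ m = z ^ k * z ^ (m - k) := by
          rw [← pow_add, Nat.add_sub_cancel' hk']
        field_simp
        rw [one_div, inv_pow, inv_pow, hzm]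
        field_simp
      rw [hmain, hrefl, hz, mul_zero]
    have hupper := EK_upper m hm c hc hne z⁻¹ hcsum
    have hsup : (Finset.range m).sup' hne (fun k => c k / c (k + 1)) ≤ r⁻¹ := by
      apply Finset.sup'_le
      intro k hk
      have hk' := Finset.mem_range.mp hk
      have hj : m - k - 1 < m := by omega
      have hr2 : r ≤ a (m - k - 1) / a (m - k - 1 + 1) :=
        Finset.inf'_le (fun k => a k / a (k + 1)) (Finset.mem_range.mpr hj)
      have he1 : m - k - 1 + 1 = m - k := by omega
      have he2 : m - (k + 1) = m - k - 1 := by omega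
      rw [he1] at hr2
      have hp1 := ha (m - k) (by omega)
      have hp2 := ha (m - k - 1) (by omega)
      show a (m - k) / a (m - (k + 1)) ≤ r⁻¹
      rw [he2]
      have h5 : r * a (m - k) ≤ a (m - k - 1) := (le_div_iff₀ hp1).mp hr2
      rw [div_le_iff₀ hp2]
      have h6 : r⁻¹ * (r * a (m - k)) ≤ r⁻¹ * a (m - k - 1) :=
        mul_le_mul_of_nonneg_left h5 (inv_nonneg.mpr hr.le)
      calc a (m - k) = r⁻¹ * (r * a (m - k)) := by field_simp
        _ ≤ r⁻¹ * a (m - k - 1) := h6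
    have hfin : ‖z⁻¹‖ ≤ r⁻¹ := hupper.trans hsup
    rw [norm_inv] at hfin
    have hz0' : 0 < ‖z‖ := norm_pos_iff.mpr hz0
    rw [inv_le_inv₀ (by positivity) hr] at hfin
    exact hfin
  · exact EK_upper m hm a ha hne z hz
end

section
/- Define f_m(z) = (z−1)^m + z^m + (z+1)^m. Then the limit set of zeros lim 𝒵(f_m) equals the imaginary axis {z ∈ ℂ : Re(z) = 0}; concretely, liminf 𝒵(f_m) = limsup 𝒵(f_m) = {Re z = 0}, where z* ∈ limsup 𝒵(f_m) iff every neighborhood of z* meets 𝒵(f_m) for infinitely many m, and z* ∈ liminf 𝒵(f_m) iff every neighborhood meets 𝒵(f_m) for all sufficiently large m. -/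
open Complex Real

lemma polar (θ : ℝ) (h : Real.cos θ ≠ 0) :
    (1 : ℂ) + (Real.tan θ : ℂ) * I = ((Real.cos θ)⁻¹ : ℝ) * Complex.exp (θ * I) := by
  have hc : Complex.cos θ ≠ 0 := by
    rw [← Complex.ofReal_cos]; exact_mod_cast h
  rw [Complex.exp_mul_I, ← Complex.ofReal_cos, ← Complex.ofReal_sin,
    Real.tan_eq_sin_div_cos]
  push_cast
  field_simp

lemma f_conj (m : ℕ) (y : ℝ) :
    (starRingEnd ℂ) (((y:ℂ)*I - 1)^m + ((y:ℂ)*I)^m + ((y:ℂ)*I + 1)^m)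
    = (-1)^m * (((y:ℂ)*I - 1)^m + ((y:ℂ)*I)^m + ((y:ℂ)*I + 1)^m) := by
  have h : (starRingEnd ℂ) ((y:ℂ)*I) = -((y:ℂ)*I) := by
    simp [Complex.conj_I]
  rw [map_add, map_add, map_pow, map_pow, map_pow, map_sub, map_add, map_one, h]
  rw [show (-((y:ℂ)*I) - 1) = -((y:ℂ)*I+1) by ring,
      show (-((y:ℂ)*I) + 1) = -((y:ℂ)*I-1) by ring,
      neg_pow ((y:ℂ)*I+1) m, neg_pow ((y:ℂ)*I) m, neg_pow ((y:ℂ)*I-1) m]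
  ring

lemma exp_pi_div_two : Complex.exp ((π/2 : ℝ) * I) = I := by
  rw [Complex.exp_mul_I, ← Complex.ofReal_cos, ← Complex.ofReal_sin,
    Real.cos_pi_div_two, Real.sin_pi_div_two]
  simp

-- powers of (1 ± tan θ · I)
lemma polar_pow (θ : ℝ) (m : ℕ) (h : Real.cos θ ≠ 0) :
    ((1 : ℂ) + (Real.tan θ : ℂ) * I)^m
    = (((Real.cos θ)⁻¹ ^ m : ℝ) : ℂ) * Complex.exp ((m * θ : ℝ) * I) := by
  rw [polar θ h, mul_pow, ← Complex.ofReal_pow]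
  congr 1
  rw [← Complex.exp_nat_mul]
  congr 1
  push_cast
  ring
set_option maxHeartbeats 1000000 in
lemma no_zero (w : ℂ) (hw : 0 < w.re) :
    ∃ r > (0:ℝ), ∃ N : ℕ, ∀ m ≥ N, ∀ z : ℂ, ‖z - w‖ < r →
      (z-1)^m + z^m + (z+1)^m ≠ 0 := by
  obtain ⟨c, hc⟩ : ∃ c, w.re = c := ⟨_, rfl⟩
  obtain ⟨W, hW⟩ : ∃ W, ‖w‖ = W := ⟨_, rfl⟩
  have hc0 : 0 < c := hc ▸ hw
  have hW0 : 0 ≤ W := hW ▸ norm_nonneg w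
  obtain ⟨S, hS⟩ : ∃ S, W + c/2 + 1 = S := ⟨_, rfl⟩
  obtain ⟨c', hc'⟩ : ∃ c', min (c+1) (2*c) = c' := ⟨_, rfl⟩
  have hSpos : 0 < S := by linarith
  have hc'A : c' ≤ c + 1 := hc' ▸ min_le_left _ _
  have hc'B : c' ≤ 2*c := hc' ▸ min_le_right _ _
  have hc'pos : 0 < c' := hc' ▸ lt_min (by linarith) (by linarith)
  have hS1 : c/2 + 1 ≤ S := by linarith
  have hc'le : c' ≤ S^2 := by nlinarith only [hc'A, hS1, hc0]
  obtain ⟨Q, hQd⟩ : ∃ Q, (S^2 - c')/S^2 = Q := ⟨_, rfl⟩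
  have hQ0 : 0 ≤ Q := hQd ▸ div_nonneg (by linarith) (by positivity)
  have hQ1 : Q < 1 := by
    rw [← hQd, div_lt_one (by positivity)]; linarith
  have hq00 : 0 ≤ Real.sqrt Q := Real.sqrt_nonneg _
  have hq01 : Real.sqrt Q < 1 := by
    calc Real.sqrt Q < Real.sqrt 1 := Real.sqrt_lt_sqrt hQ0 hQ1
    _ = 1 := Real.sqrt_one
  obtain ⟨N, hN⟩ := exists_pow_lt_of_lt_one (by norm_num : (0:ℝ) < 1/2) hq01
  refine ⟨c/2, by linarith, N, ?_⟩
  intro m hm z hz hf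
  have hre : c/2 < z.re := by
    have h1 : |(z - w).re| ≤ ‖z - w‖ := Complex.abs_re_le_norm _
    have h2 : (z - w).re = z.re - c := by simp [Complex.sub_re, hc]
    rw [h2] at h1
    have := abs_le.mp h1
    linarith [this.1]
  have hzn : ‖z‖ ≤ W + c/2 := by
    have h3 : w + (z - w) = z := by ring
    calc ‖z‖ = ‖w + (z - w)‖ := by rw [h3]
    _ ≤ ‖w‖ + ‖z - w‖ := norm_add_le _ _
    _ ≤ W + c/2 := by rw [hW]; linarith
  obtain ⟨x, hx⟩ : ∃ x, z.re = x := ⟨_, rfl⟩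
  obtain ⟨v, hv⟩ : ∃ v, z.im = v := ⟨_, rfl⟩
  obtain ⟨p, hp⟩ : ∃ p, ‖z‖ = p := ⟨_, rfl⟩
  obtain ⟨q, hq⟩ : ∃ q, ‖z - 1‖ = q := ⟨_, rfl⟩
  obtain ⟨s, hs⟩ : ∃ s, ‖z + 1‖ = s := ⟨_, rfl⟩
  have hxc : c/2 < x := hx ▸ hre
  have hpW : p ≤ W + c/2 := hp ▸ hzn
  have hpnn : 0 ≤ p := hp ▸ norm_nonneg _
  have hqnn : 0 ≤ q := hq ▸ norm_nonneg _
  have hsnn : 0 ≤ s := hs ▸ norm_nonneg _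
  have hp2 : p^2 = x^2 + v^2 := by
    rw [← hp, ← hx, ← hv, Complex.sq_norm, Complex.normSq_apply]; ring
  have hq2 : q^2 = (x - 1)^2 + v^2 := by
    rw [← hq, ← hx, ← hv, Complex.sq_norm, Complex.normSq_apply]
    simp [Complex.sub_re, Complex.sub_im]
    ring
  have hs2 : s^2 = (x + 1)^2 + v^2 := by
    rw [← hs, ← hx, ← hv, Complex.sq_norm, Complex.normSq_apply]
    simp [Complex.add_re, Complex.add_im]
    ring
  have hsS : s ≤ S := by
    have h4 : ‖z + 1‖ ≤ ‖z‖ + ‖(1:ℂ)‖ := norm_add_le _ _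
    rw [hp, hs, norm_one] at h4
    linarith
  have hppos : p^2 + c' ≤ s^2 := by linarith only [hp2, hs2, hc'A, hxc, hc0]
  have hqpos : q^2 + c' ≤ s^2 := by linarith only [hq2, hs2, hc'B, hxc, hc0]
  have hspos : 0 < s := by
    rcases hsnn.lt_or_eq with h | h
    · exact h
    · exfalso
      rw [← h] at hs2
      have h5 : 0 < x + 1 := by linarith
      nlinarith only [hs2, sq_nonneg v, h5]
  have key : ∀ t : ℝ, 0 ≤ t → t^2 + c' ≤ s^2 → t ≤ Real.sqrt Q * s := by
    intro t ht h
    have hs2S2 : s^2 ≤ S^2 := by nlinarith only [hsS, hsnn]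
    have h1 : t^2 * S^2 ≤ (S^2 - c') * s^2 := by
      nlinarith only [h, hs2S2, hc'pos, sq_nonneg S, sq_nonneg t, hSpos]
    have h2 : t^2 ≤ Q * s^2 := by
      rw [← hQd, div_mul_eq_mul_div, le_div_iff₀ (by positivity)]; linarith
    calc t = Real.sqrt (t^2) := (Real.sqrt_sq ht).symm
    _ ≤ Real.sqrt (Q * s^2) := Real.sqrt_le_sqrt h2
    _ = Real.sqrt Q * s := by rw [Real.sqrt_mul hQ0, Real.sqrt_sq hsnn]
  have hps := key p hpnn hppos
  have hqs := key q hqnn hqpos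
  have hfe : (z+1)^m = -((z-1)^m + z^m) := by linear_combination hf
  have hsm : s^m ≤ q^m + p^m := by
    calc s^m = ‖(z+1)^m‖ := by rw [norm_pow, hs]
    _ = ‖(z-1)^m + z^m‖ := by rw [hfe, norm_neg]
    _ ≤ ‖(z-1)^m‖ + ‖z^m‖ := norm_add_le _ _
    _ = q^m + p^m := by rw [norm_pow, norm_pow, hq, hp]
  have hq0m : Real.sqrt Q ^ m < 1/2 :=
    lt_of_le_of_lt (pow_le_pow_of_le_one hq00 hq01.le hm) hN
  have h2p : p^m ≤ Real.sqrt Q ^ m * s^m := by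
    rw [← mul_pow]; exact pow_le_pow_left₀ hpnn hps m
  have h2q : q^m ≤ Real.sqrt Q ^ m * s^m := by
    rw [← mul_pow]; exact pow_le_pow_left₀ hqnn hqs m
  have hsmpos : 0 < s^m := pow_pos hspos m
  linarith only [hsm, h2p, h2q, mul_lt_mul_of_pos_right hq0m hsmpos]
set_option maxHeartbeats 1000000 in
lemma axis_zero (c r : ℝ) (hr : 0 < r) :
    ∃ N : ℕ, ∀ m ≥ N, ∃ z : ℂ,
      (z-1)^m + z^m + (z+1)^m = 0 ∧ ‖z - (c:ℂ)*I‖ < r := by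
  have hpi : 0 < π := Real.pi_pos
  set b : ℝ := c + r/2 with hb
  have hcb : c < b := by rw [hb]; linarith
  have hab : Real.arctan c < Real.arctan b := Real.arctan_strictMono hcb
  set Δ : ℝ := Real.arctan b - Real.arctan c with hΔd
  have hΔ : 0 < Δ := by rw [hΔd]; linarith
  refine ⟨⌈(4*π)/Δ⌉₊ + 1, ?_⟩
  intro m hm
  have hm1 : 1 ≤ m := le_trans (Nat.le_add_left 1 _) hm
  have hmne : m ≠ 0 := by omega
  have hm0 : (m:ℝ) ≠ 0 := by positivity
  have hmpos : (0:ℝ) < m := by positivity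
  have hmR : (4*π)/Δ ≤ (m:ℝ) := by
    calc (4*π)/Δ ≤ (⌈(4*π)/Δ⌉₊ : ℝ) := Nat.le_ceil _
    _ ≤ (m:ℝ) := by exact_mod_cast le_trans (Nat.le_succ _) hm
  have hm4 : 4*π ≤ (m:ℝ) * Δ := by
    rw [div_le_iff₀ hΔ] at hmR; linarith
  set A : ℝ := m * Real.arctan c with hA
  set k : ℤ := ⌈(A - m*(π/2)) / (2*π)⌉ with hk
  set t1 : ℝ := 2*π*k + m*(π/2) with ht1
  have hk1 : (A - m*(π/2)) / (2*π) ≤ (k:ℝ) := Int.le_ceil _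
  have hk2 : (k:ℝ) < (A - m*(π/2)) / (2*π) + 1 := Int.ceil_lt_add_one _
  have ht1A : A ≤ t1 := by
    rw [div_le_iff₀ (by positivity)] at hk1
    rw [ht1]; linarith
  have ht1B : t1 < A + 2*π := by
    rw [div_add' _ _ _ (by positivity : (2*π) ≠ 0), lt_div_iff₀ (by positivity)] at hk2
    rw [ht1]; linarith
  set t2 : ℝ := t1 + π with ht2
  have ht2B : t2 ≤ m * Real.arctan b := by
    have h9 : m * Real.arctan b = A + m * Δ := by rw [hA, hΔd]; ring
    rw [h9, ht2]; linarith
  set θ1 : ℝ := t1 / m with hθ1d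
  set θ2 : ℝ := t2 / m with hθ2d
  have hmt1 : (m:ℝ) * θ1 = t1 := by rw [hθ1d]; field_simp
  have hmt2 : (m:ℝ) * θ2 = t2 := by rw [hθ2d]; field_simp
  have hθ1l : Real.arctan c ≤ θ1 := by
    rw [hθ1d, le_div_iff₀ hmpos]; rw [hA] at ht1A; linarith
  have hθ2u : θ2 ≤ Real.arctan b := by
    rw [hθ2d, div_le_iff₀ hmpos]; linarith
  have hθ12 : θ1 < θ2 := by
    rw [hθ1d, hθ2d]
    gcongr
    rw [ht2]; linarith
  have hθ1mem : θ1 ∈ Set.Ioo (-(π/2)) (π/2) :=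
    ⟨lt_of_lt_of_le (Real.neg_pi_div_two_lt_arctan c) hθ1l,
     lt_trans hθ12 (lt_of_le_of_lt hθ2u (Real.arctan_lt_pi_div_two b))⟩
  have hθ2mem : θ2 ∈ Set.Ioo (-(π/2)) (π/2) :=
    ⟨lt_trans (lt_of_lt_of_le (Real.neg_pi_div_two_lt_arctan c) hθ1l) hθ12,
     lt_of_le_of_lt hθ2u (Real.arctan_lt_pi_div_two b)⟩
  have hcos1 : 0 < Real.cos θ1 := Real.cos_pos_of_mem_Ioo hθ1mem
  have hcos2 : 0 < Real.cos θ2 := Real.cos_pos_of_mem_Ioo hθ2mem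
  set y1 : ℝ := Real.tan θ1 with hy1d
  set y2 : ℝ := Real.tan θ2 with hy2d
  have harc1 : Real.arctan y1 = θ1 := Real.arctan_tan hθ1mem.1 hθ1mem.2
  have harc2 : Real.arctan y2 = θ2 := Real.arctan_tan hθ2mem.1 hθ2mem.2
  have hy1a : c ≤ y1 := by
    have : Real.arctan c ≤ Real.arctan y1 := by rw [harc1]; exact hθ1l
    exact (Real.arctan_strictMono.le_iff_le).mp this
  have hy2b : y2 ≤ b := by
    have : Real.arctan y2 ≤ Real.arctan b := by rw [harc2]; exact hθ2u
    exact (Real.arctan_strictMono.le_iff_le).mp this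
  have hy12 : y1 < y2 := by
    have : Real.arctan y1 < Real.arctan y2 := by rw [harc1, harc2]; exact hθ12
    exact (Real.arctan_strictMono.lt_iff_lt).mp this
  set ρ1 : ℝ := (Real.cos θ1)⁻¹ with hρ1d
  set ρ2 : ℝ := (Real.cos θ2)⁻¹ with hρ2d
  have hρ1pos : 0 < ρ1 := by rw [hρ1d]; positivity
  have hρ2pos : 0 < ρ2 := by rw [hρ2d]; positivity
  -- exponential values
  have hImne : (I : ℂ)^m ≠ 0 := pow_ne_zero _ Complex.I_ne_zero
  have he1 : Complex.exp ((t1:ℝ) * I) = I^m := by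
    have h10 : ((t1:ℝ) : ℂ) * I = (k:ℂ) * (2*(π:ℂ)*I) + (m:ℂ) * (((π/2 : ℝ):ℂ) * I) := by
      rw [ht1]; push_cast; ring
    rw [h10, Complex.exp_add, Complex.exp_int_mul_two_pi_mul_I, one_mul,
      Complex.exp_nat_mul, exp_pi_div_two]
  have he2 : Complex.exp ((t2:ℝ) * I) = -I^m := by
    have h11 : ((t2:ℝ) : ℂ) * I = (t1:ℝ) * I + (π:ℂ) * I := by
      rw [ht2]; push_cast; ring
    rw [h11, Complex.exp_add, he1, Complex.exp_pi_mul_I]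
    ring
  have hne1 : Complex.exp (((-t1 : ℝ) : ℂ) * I) = (-1)^m * I^m := by
    rw [Complex.ofReal_neg, neg_mul, Complex.exp_neg, he1, ← inv_pow, Complex.inv_I,
      neg_pow I m]
  have hne2 : Complex.exp (((-t2 : ℝ) : ℂ) * I) = -((-1)^m * I^m) := by
    rw [Complex.ofReal_neg, neg_mul, Complex.exp_neg, he2, inv_neg, ← inv_pow, Complex.inv_I,
      neg_pow I m]
  -- power values
  have hpow1p : ((y1:ℂ)*I + 1)^m = ((ρ1^m : ℝ):ℂ) * I^m := by
    rw [show ((y1:ℂ)*I + 1) = (1 : ℂ) + (y1:ℂ)*I by ring, hy1d,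
      polar_pow θ1 m hcos1.ne', show (m:ℝ) * θ1 = t1 from hmt1, he1, hρ1d]
  have hpow2p : ((y2:ℂ)*I + 1)^m = -(((ρ2^m : ℝ):ℂ) * I^m) := by
    rw [show ((y2:ℂ)*I + 1) = (1 : ℂ) + (y2:ℂ)*I by ring, hy2d,
      polar_pow θ2 m hcos2.ne', show (m:ℝ) * θ2 = t2 from hmt2, he2, hρ2d]
    ring
  have hpow1m : ((y1:ℂ)*I - 1)^m = ((ρ1^m : ℝ):ℂ) * I^m := by
    have htn1 : Real.tan (-θ1) = -y1 := by rw [Real.tan_neg, hy1d]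
    have h13 : ((y1:ℂ)*I - 1) = -((1 : ℂ) + ((Real.tan (-θ1) : ℝ) : ℂ) * I) := by
      rw [htn1, Complex.ofReal_neg]; ring
    rw [h13, neg_pow, polar_pow (-θ1) m (by rw [Real.cos_neg]; exact hcos1.ne'),
      show (m:ℝ) * (-θ1) = -t1 by rw [← hmt1]; ring, hne1, Real.cos_neg, ← hρ1d]
    rw [show ((-1:ℂ)^m * (((ρ1^m:ℝ):ℂ) * ((-1)^m * I^m))) = ((-1:ℂ)^m)^2 * (((ρ1^m:ℝ):ℂ) * I^m) by ring,
      ← pow_mul, mul_comm m 2, pow_mul]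
    norm_num
  have hpow2m : ((y2:ℂ)*I - 1)^m = -(((ρ2^m : ℝ):ℂ) * I^m) := by
    have htn2 : Real.tan (-θ2) = -y2 := by rw [Real.tan_neg, hy2d]
    have h14 : ((y2:ℂ)*I - 1) = -((1 : ℂ) + ((Real.tan (-θ2) : ℝ) : ℂ) * I) := by
      rw [htn2, Complex.ofReal_neg]; ring
    rw [h14, neg_pow, polar_pow (-θ2) m (by rw [Real.cos_neg]; exact hcos2.ne'),
      show (m:ℝ) * (-θ2) = -t2 by rw [← hmt2]; ring, hne2, Real.cos_neg, ← hρ2d]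
    rw [show ((-1:ℂ)^m * (((ρ2^m:ℝ):ℂ) * -((-1)^m * I^m))) = -(((-1:ℂ)^m)^2 * (((ρ2^m:ℝ):ℂ) * I^m)) by ring,
      ← pow_mul, mul_comm m 2, pow_mul]
    norm_num
  have hpowmid1 : ((y1:ℂ)*I)^m = ((y1^m : ℝ):ℂ) * I^m := by
    rw [mul_pow]; push_cast; ring
  have hpowmid2 : ((y2:ℂ)*I)^m = ((y2^m : ℝ):ℂ) * I^m := by
    rw [mul_pow]; push_cast; ring
  -- the real-valued function G
  set G : ℝ → ℝ := fun y =>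
    (((I:ℂ)^m)⁻¹ * (((y:ℂ)*I - 1)^m + ((y:ℂ)*I)^m + ((y:ℂ)*I + 1)^m)).re with hG
  have hGcont : Continuous G := by
    rw [hG]; fun_prop
  have hG1 : G y1 = 2*ρ1^m + y1^m := by
    rw [hG]
    simp only
    rw [hpow1m, hpowmid1, hpow1p,
      show (((ρ1^m:ℝ):ℂ) * I^m + ((y1^m:ℝ):ℂ) * I^m + ((ρ1^m:ℝ):ℂ) * I^m)
        = I^m * (((2*ρ1^m + y1^m : ℝ)):ℂ) by push_cast; ring,
      ← mul_assoc, inv_mul_cancel₀ hImne, one_mul, Complex.ofReal_re]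
  have hG2 : G y2 = -(2*ρ2^m) + y2^m := by
    rw [hG]
    simp only
    rw [hpow2m, hpowmid2, hpow2p,
      show (-(((ρ2^m:ℝ):ℂ) * I^m) + ((y2^m:ℝ):ℂ) * I^m + -(((ρ2^m:ℝ):ℂ) * I^m))
        = I^m * (((-(2*ρ2^m) + y2^m : ℝ)):ℂ) by push_cast; ring,
      ← mul_assoc, inv_mul_cancel₀ hImne, one_mul, Complex.ofReal_re]
  -- sign information
  have hρy1 : |y1| < ρ1 := by
    have hsq : ρ1^2 = y1^2 + 1 := by
      rw [hρ1d, hy1d, Real.tan_eq_sin_div_cos]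
      field_simp
      exact (Real.sin_sq_add_cos_sq θ1).symm
    nlinarith only [abs_nonneg y1, _root_.sq_abs y1, hρ1pos, hsq]
  have hρy2 : |y2| < ρ2 := by
    have hsq : ρ2^2 = y2^2 + 1 := by
      rw [hρ2d, hy2d, Real.tan_eq_sin_div_cos]
      field_simp
      exact (Real.sin_sq_add_cos_sq θ2).symm
    nlinarith only [abs_nonneg y2, _root_.sq_abs y2, hρ2pos, hsq]
  have hpow1 : |y1|^m < ρ1^m := pow_lt_pow_left₀ hρy1 (abs_nonneg _) hmne
  have hpow2 : |y2|^m < ρ2^m := pow_lt_pow_left₀ hρy2 (abs_nonneg _) hmne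
  have habs1 : -(|y1|^m) ≤ y1^m := by
    rw [← _root_.abs_pow]; exact neg_abs_le _
  have habs2 : y2^m ≤ |y2|^m := by
    rw [← _root_.abs_pow]; exact le_abs_self _
  have hG1pos : 0 < G y1 := by
    rw [hG1]
    have := pow_pos hρ1pos m
    linarith
  have hG2neg : G y2 < 0 := by
    rw [hG2]
    have := pow_pos hρ2pos m
    linarith
  -- intermediate value theorem
  have hivt := intermediate_value_Icc' hy12.le hGcont.continuousOn
  have h0mem : (0:ℝ) ∈ Set.Icc (G y2) (G y1) := ⟨hG2neg.le, hG1pos.le⟩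
  obtain ⟨y0, hy0mem, hGy0⟩ := hivt h0mem
  -- conclude
  refine ⟨(y0:ℂ)*I, ?_, ?_⟩
  · -- zero of f
    set v : ℂ := ((I:ℂ)^m)⁻¹ * (((y0:ℂ)*I - 1)^m + ((y0:ℂ)*I)^m + ((y0:ℂ)*I + 1)^m) with hv
    have hcI : (starRingEnd ℂ) (((I:ℂ)^m)⁻¹) = (-1)^m * ((I:ℂ)^m)⁻¹ := by
      rw [map_inv₀, map_pow, Complex.conj_I, neg_pow I m, mul_inv, ← inv_pow, inv_neg, inv_one]
    have hconj : (starRingEnd ℂ) v = v := by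
      rw [hv, map_mul, hcI, f_conj m y0,
        show ((-1:ℂ)^m * ((I:ℂ)^m)⁻¹ * ((-1)^m * (((y0:ℂ)*I - 1)^m + ((y0:ℂ)*I)^m + ((y0:ℂ)*I + 1)^m)))
          = ((-1:ℂ)^m)^2 * (((I:ℂ)^m)⁻¹ * (((y0:ℂ)*I - 1)^m + ((y0:ℂ)*I)^m + ((y0:ℂ)*I + 1)^m)) by ring,
        ← pow_mul, mul_comm m 2, pow_mul]
      norm_num
    have him : v.im = 0 := Complex.conj_eq_iff_im.mp hconj
    have hre : v.re = 0 := hGy0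
    have hv0 : v = 0 := Complex.ext hre him
    have := hv0
    rw [hv] at this
    have hfz : (((y0:ℂ)*I - 1)^m + ((y0:ℂ)*I)^m + ((y0:ℂ)*I + 1)^m) = 0 := by
      rcases mul_eq_zero.mp this with h | h
      · exact absurd h (inv_ne_zero hImne)
      · exact h
    convert hfz using 2 <;> ring
  · -- distance
    have h15 : (y0:ℂ)*I - (c:ℂ)*I = ((y0 - c : ℝ):ℂ) * I := by push_cast; ring
    rw [h15, norm_mul, Complex.norm_I, mul_one, Complex.norm_real, Real.norm_eq_abs]
    have hy0l : c ≤ y0 := le_trans hy1a hy0mem.1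
    have hy0u : y0 ≤ b := le_trans hy0mem.2 hy2b
    have hy0u2 : y0 ≤ c + r/2 := by rw [← hb]; exact hy0u
    have h16 : |y0 - c| ≤ r/2 :=
      abs_le.mpr ⟨by linarith only [hy0l, hr], by linarith only [hy0u2]⟩
    linarith only [h16, hr]

lemma f_neg' (m : ℕ) (z : ℂ) : ((-z)-1)^m + (-z)^m + ((-z)+1)^m
    = (-1)^m * ((z-1)^m + z^m + (z+1)^m) := by
  rw [show (-z)-1 = -(z+1) by ring, show (-z)+1 = -(z-1) by ring,
    neg_pow (z+1) m, neg_pow z m, neg_pow (z-1) m]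
  ring

lemma w_eq_im_mul_I {w : ℂ} (hw : w.re = 0) : ((w.im : ℂ)) * I = w := by
  apply Complex.ext
  · simp [hw]
  · simp

/-- For `f_m(z) = (z-1)^m + z^m + (z+1)^m`, both the liminf and limsup of the
zero sets `𝒵(f_m)` equal the imaginary axis `{z : Re z = 0}`. -/
theorem stmt_18 :
    let f : ℕ → ℂ → ℂ := fun m z => (z - 1) ^ m + z ^ m + (z + 1) ^ m
    ({w : ℂ | ∀ r > (0 : ℝ), ∃ N : ℕ, ∀ m ≥ N, ∃ z : ℂ, f m z = 0 ∧ ‖z - w‖ < r}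
        = {z : ℂ | z.re = 0}) ∧
    ({w : ℂ | ∀ r > (0 : ℝ), ∀ N : ℕ, ∃ m ≥ N, ∃ z : ℂ, f m z = 0 ∧ ‖z - w‖ < r}
        = {z : ℂ | z.re = 0}) := by
  intro f
  have hf : ∀ m z, f m z = (z - 1) ^ m + z ^ m + (z + 1) ^ m := fun m z => rfl
  -- the two key implications
  have axis_mem : ∀ w : ℂ, w.re = 0 → ∀ r > (0:ℝ),
      ∃ N : ℕ, ∀ m ≥ N, ∃ z : ℂ, f m z = 0 ∧ ‖z - w‖ < r := by
    intro w hw r hr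
    obtain ⟨N, hN⟩ := axis_zero w.im r hr
    refine ⟨N, fun m hm => ?_⟩
    obtain ⟨z, hz0, hzd⟩ := hN m hm
    refine ⟨z, by rw [hf]; exact hz0, ?_⟩
    rwa [w_eq_im_mul_I hw] at hzd
  have not_axis : ∀ w : ℂ, w.re ≠ 0 →
      ∃ r > (0:ℝ), ∃ N : ℕ, ∀ m ≥ N, ∀ z : ℂ, ‖z - w‖ < r → f m z ≠ 0 := by
    intro w hw
    rcases lt_or_gt_of_ne hw with hneg | hpos
    · obtain ⟨r, hr, N, hN⟩ := no_zero (-w) (by rw [Complex.neg_re]; linarith)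
      refine ⟨r, hr, N, fun m hm z hz hfz => ?_⟩
      have hdist : ‖(-z) - (-w)‖ < r := by
        rw [show (-z) - (-w) = -(z - w) by ring, norm_neg]; exact hz
      apply hN m hm (-z) hdist
      have hfz' : (z - 1)^m + z^m + (z + 1)^m = 0 := hfz
      rw [f_neg' m z, hfz', mul_zero]
    · obtain ⟨r, hr, N, hN⟩ := no_zero w hpos
      exact ⟨r, hr, N, fun m hm z hz hfz => hN m hm z hz (by rw [← hf]; exact hfz)⟩
  constructor
  · ext w
    simp only [Set.mem_setOf_eq]
    constructor
    · intro h
      by_contra hw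
      obtain ⟨r, hr, N, hN⟩ := not_axis w hw
      obtain ⟨N₀, hN₀⟩ := h r hr
      obtain ⟨z, hz0, hzd⟩ := hN₀ (max N N₀) (le_max_right _ _)
      exact hN (max N N₀) (le_max_left _ _) z hzd hz0
    · intro hw
      exact axis_mem w hw
  · ext w
    simp only [Set.mem_setOf_eq]
    constructor
    · intro h
      by_contra hw
      obtain ⟨r, hr, N, hN⟩ := not_axis w hw
      obtain ⟨m, hm, z, hz0, hzd⟩ := h r hr N
      exact hN m hm z hzd hz0
    · intro hw r hr N
      obtain ⟨N₀, hN₀⟩ := axis_mem w hw r hr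
      obtain ⟨z, hz⟩ := hN₀ (max N N₀) (le_max_right _ _)
      exact ⟨max N N₀, le_max_left _ _, z, hz⟩
end
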